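/- arXiv:2603.25055 — 4 statements merged into one kernel-verified Lean document; each statement's English description precedes it below -/
import Mathlib

section
/- Let (X_1,Y_1),...,(X_n,Y_n) be independent random vectors with absolutely continuous bivariate distribution functions F_1,...,F_n and density functions f_1,...,f_n. Then the expected value of the rank Kendall correlation coefficient equals the theoretical Kendall correlation coefficient: E[τ̃_n] = τ_n. -/
open MeasureTheory ProbabilityTheory

/-- For independent random vectors `(X_1,Y_1), …, (X_n,Y_n)` with absolutely
continuous bivariate distributions (given by densities `f i` with respect to Lebesgue measure
on `ℝ²`), the expected value of the rank Kendall correlation coefficient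
`τ̃_n = 4 ∑_{j<i} I(Y_{j,n} ≤ Y_{i,n}) / (n(n-1)) - 1` (built from the concomitants of the
order statistics of the `X`-sample, encoded by an a.s. sorting permutation `σ ω`) equals the
theoretical Kendall correlation coefficient
`τ_n = 4 ∑_{i≠j} P(X_j ≤ X_i, Y_j ≤ Y_i) / (n(n-1)) - 1`. -/
theorem expectation_rank_kendall_eq_theoretical_kendall
    {Ω : Type*} [MeasureSpace Ω] [IsProbabilityMeasure (ℙ : Measure Ω)]
    (n : ℕ) (hn : 2 ≤ n)
    (X Y : Fin n → Ω → ℝ)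
    (hXY : ∀ i, Measurable fun ω => (X i ω, Y i ω))
    (hindep : iIndepFun (fun i ω => (X i ω, Y i ω)) ℙ)
    (f : Fin n → ℝ × ℝ → ℝ)
    (hf_meas : ∀ i, Measurable (f i))
    (hf_nonneg : ∀ i p, 0 ≤ f i p)
    (hlaw : ∀ i, Measure.map (fun ω => (X i ω, Y i ω)) ℙ
        = (volume : Measure (ℝ × ℝ)).withDensity fun p => ENNReal.ofReal (f i p))
    (σ : Ω → Equiv.Perm (Fin n))
    (hσ : ∀ᵐ ω ∂ℙ, StrictMono fun j : Fin n => X (σ ω j) ω) :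
    ∫ ω, (4 * (∑ i : Fin n, ∑ j : Fin n,
          if j < i ∧ Y (σ ω j) ω ≤ Y (σ ω i) ω then (1 : ℝ) else 0)
        / (n * (n - 1)) - 1) ∂ℙ
      = 4 * (∑ i : Fin n, ∑ j : Fin n,
          if j ≠ i then (ℙ {ω | X j ω ≤ X i ω ∧ Y j ω ≤ Y i ω}).toReal else 0)
        / (n * (n - 1)) - 1 := by
  have hX : ∀ i, Measurable (X i) := fun i => (measurable_fst.comp (hXY i))
  have hY : ∀ i, Measurable (Y i) := fun i => (measurable_snd.comp (hXY i))
  set c : ℝ := (n : ℝ) * ((n : ℝ) - 1) with hc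
  -- measurable sets
  have hs_meas : ∀ i j : Fin n,
      MeasurableSet {ω | X j ω < X i ω ∧ Y j ω ≤ Y i ω} := by
    intro i j
    exact (measurableSet_lt (hX j) (hX i)).inter (measurableSet_le (hY j) (hY i))
  -- the measurable version of the indicator double sum
  set h : Ω → ℝ := fun ω => ∑ i : Fin n, ∑ j : Fin n,
      if X j ω < X i ω ∧ Y j ω ≤ Y i ω then (1 : ℝ) else 0 with hh
  -- pointwise a.e. equality of the two double sums
  have hae : ∀ᵐ ω ∂ℙ,
      (∑ i : Fin n, ∑ j : Fin n,
        if j < i ∧ Y (σ ω j) ω ≤ Y (σ ω i) ω then (1 : ℝ) else 0) = h ω := by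
    filter_upwards [hσ] with ω hs
    have key :
        (∑ p : Fin n × Fin n,
          if p.2 < p.1 ∧ Y (σ ω p.2) ω ≤ Y (σ ω p.1) ω then (1 : ℝ) else 0)
        = ∑ q : Fin n × Fin n,
          if X q.2 ω < X q.1 ω ∧ Y q.2 ω ≤ Y q.1 ω then (1 : ℝ) else 0 := by
      refine Fintype.sum_equiv (Equiv.prodCongr (σ ω) (σ ω)) _ _ ?_
      intro p
      simp only [Equiv.prodCongr_apply, Prod.map]
      have : p.2 < p.1 ↔ X (σ ω p.2) ω < X (σ ω p.1) ω := (hs.lt_iff_lt).symm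
      rw [if_congr (and_congr_left' this) rfl rfl]
    simp only [hh]
    simpa only [Fintype.sum_prod_type] using key
  -- a.e. injectivity of X
  have hne : ∀ i j : Fin n, j ≠ i → (ℙ {ω | X j ω = X i ω}) = 0 := by
    intro i j hij
    have : ∀ᵐ ω ∂ℙ, ¬ (X j ω = X i ω) := by
      filter_upwards [hσ] with ω hs
      have hinj : Function.Injective (fun i => X i ω) := by
        have he : (fun i => X i ω) = (fun k => X (σ ω k) ω) ∘ (σ ω).symm := by
          funext i; simp
        rw [he]
        exact hs.injective.comp (Equiv.injective _)
      exact fun hEq => hij (hinj hEq)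
    simpa [ae_iff] using this
  -- integrability
  have hint_term : ∀ i j : Fin n,
      Integrable (fun ω => if X j ω < X i ω ∧ Y j ω ≤ Y i ω then (1 : ℝ) else 0) ℙ := by
    intro i j
    have heq : (fun ω => if X j ω < X i ω ∧ Y j ω ≤ Y i ω then (1 : ℝ) else 0)
        = Set.indicator {ω | X j ω < X i ω ∧ Y j ω ≤ Y i ω} (fun _ => (1 : ℝ)) := by
      funext ω
      by_cases hp : X j ω < X i ω ∧ Y j ω ≤ Y i ω <;>
        simp [Set.indicator_apply, Set.mem_setOf_eq, hp]
    rw [heq]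
    exact (integrable_const (1 : ℝ) (μ := (ℙ : Measure Ω))).indicator (hs_meas i j)
  have hint : Integrable h ℙ := by
    refine integrable_finset_sum _ (fun i _ => integrable_finset_sum _ (fun j _ => ?_))
    exact hint_term i j
  -- integral of each indicator
  have hterm : ∀ i j : Fin n,
      ∫ ω, (if X j ω < X i ω ∧ Y j ω ≤ Y i ω then (1 : ℝ) else 0) ∂ℙ
        = (ℙ {ω | X j ω < X i ω ∧ Y j ω ≤ Y i ω}).toReal := by
    intro i j
    have heq : (fun ω => if X j ω < X i ω ∧ Y j ω ≤ Y i ω then (1 : ℝ) else 0)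
        = Set.indicator {ω | X j ω < X i ω ∧ Y j ω ≤ Y i ω} (fun _ => (1 : ℝ)) := by
      funext ω
      by_cases hp : X j ω < X i ω ∧ Y j ω ≤ Y i ω <;>
        simp [Set.indicator_apply, Set.mem_setOf_eq, hp]
    rw [heq]
    simpa [Measure.real] using integral_indicator_const (1 : ℝ) (hs_meas i j) (μ := (ℙ : Measure Ω))
  have hih : ∫ ω, h ω ∂ℙ
      = ∑ i : Fin n, ∑ j : Fin n, (ℙ {ω | X j ω < X i ω ∧ Y j ω ≤ Y i ω}).toReal := by
    rw [hh]
    rw [integral_finset_sum _ (fun i _ => integrable_finset_sum _ (fun j _ => hint_term i j))]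
    refine Finset.sum_congr rfl (fun i _ => ?_)
    rw [integral_finset_sum _ (fun j _ => hint_term i j)]
    exact Finset.sum_congr rfl (fun j _ => hterm i j)
  -- main computation
  have hLHS : ∫ ω, (4 * (∑ i : Fin n, ∑ j : Fin n,
          if j < i ∧ Y (σ ω j) ω ≤ Y (σ ω i) ω then (1 : ℝ) else 0) / c - 1) ∂ℙ
      = 4 * (∫ ω, h ω ∂ℙ) / c - 1 := by
    have h1 : ∫ ω, (4 * (∑ i : Fin n, ∑ j : Fin n,
          if j < i ∧ Y (σ ω j) ω ≤ Y (σ ω i) ω then (1 : ℝ) else 0) / c - 1) ∂ℙ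
        = ∫ ω, (4 * h ω / c - 1) ∂ℙ := by
      refine integral_congr_ae ?_
      filter_upwards [hae] with ω hω
      rw [hω]
    rw [h1]
    rw [integral_sub (((hint.const_mul 4).div_const c)) (integrable_const 1)]
    rw [integral_div, integral_const_mul, integral_const]
    simp
  rw [hLHS, hih]
  have hsum : (∑ i : Fin n, ∑ j : Fin n, (ℙ {ω | X j ω < X i ω ∧ Y j ω ≤ Y i ω}).toReal)
      = ∑ i : Fin n, ∑ j : Fin n,
          if j ≠ i then (ℙ {ω | X j ω ≤ X i ω ∧ Y j ω ≤ Y i ω}).toReal else 0 := by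
    apply Finset.sum_congr rfl
    intro i _
    apply Finset.sum_congr rfl
    intro j _
    by_cases hij : j = i
    · subst hij
      simp
    · rw [if_pos hij]
      have hAB : {ω | X j ω < X i ω ∧ Y j ω ≤ Y i ω}
          =ᵐ[ℙ] {ω | X j ω ≤ X i ω ∧ Y j ω ≤ Y i ω} := by
        have hz : ∀ᵐ ω ∂ℙ, X j ω ≠ X i ω :=
          ae_iff.mpr (by simpa using hne i j hij)
        filter_upwards [hz] with ω hω
        simp only [Set.mem_setOf_eq, eq_iff_iff]
        exact and_congr_left' ⟨le_of_lt, fun h' => h'.lt_of_ne hω⟩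
      rw [measure_congr hAB]
  rw [hsum]
end

section
/- Let (X_i,Y_i), i ≥ 1, be a sequence of independent random vectors with absolutely continuous bivariate distribution functions F_i, and let τ = lim_{n→∞} τ_n (which exists). Then the rank Kendall correlation coefficient converges in probability to τ: τ̃_n →^p τ as n → ∞, i.e., for every ε > 0, P(|τ̃_n − τ| > ε) → 0. -/
open MeasureTheory ProbabilityTheory Filter

namespace RKAux

variable {Ω : Type*} [MeasureSpace Ω] [IsProbabilityMeasure (ℙ : Measure Ω)]

/-- the basic pair event -/
def A (X Y : ℕ → Ω → ℝ) (p : ℕ × ℕ) : Set Ω :=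
  {ω | X p.1 ω < X p.2 ω ∧ Y p.1 ω ≤ Y p.2 ω}

theorem measurableSet_A {X Y : ℕ → Ω → ℝ}
    (hXY : ∀ i, Measurable fun ω => (X i ω, Y i ω)) (p : ℕ × ℕ) :
    MeasurableSet (A X Y p) := by
  have hX : ∀ i, Measurable (X i) := fun i => (measurable_fst.comp (hXY i))
  have hY : ∀ i, Measurable (Y i) := fun i => (measurable_snd.comp (hXY i))
  exact (measurableSet_lt (hX p.1) (hX p.2)).inter (measurableSet_le (hY p.1) (hY p.2))

theorem atom_free {X Y : ℕ → Ω → ℝ}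
    (hXY : ∀ i, Measurable fun ω => (X i ω, Y i ω))
    {f : ℕ → ℝ × ℝ → ℝ}
    (hlaw : ∀ i, Measure.map (fun ω => (X i ω, Y i ω)) ℙ
        = (volume : Measure (ℝ × ℝ)).withDensity fun p => ENNReal.ofReal (f i p))
    (i : ℕ) (c : ℝ) : ℙ {ω | X i ω = c} = 0 := by
  have hset : MeasurableSet {p : ℝ × ℝ | p.1 = c} :=
    measurable_fst (measurableSet_singleton c)
  have h1 : {ω | X i ω = c} = (fun ω => (X i ω, Y i ω)) ⁻¹' {p : ℝ × ℝ | p.1 = c} := rfl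
  rw [h1, ← Measure.map_apply (hXY i) hset, hlaw i]
  apply (withDensity_absolutelyContinuous (volume : Measure (ℝ × ℝ)) _)
  have h2 : {p : ℝ × ℝ | p.1 = c} = ({c} : Set ℝ) ×ˢ (Set.univ : Set ℝ) := by
    ext ⟨x, y⟩; simp [eq_comm]
  rw [h2, Measure.volume_eq_prod, Measure.prod_prod]
  simp

theorem diag_null {X Y : ℕ → Ω → ℝ}
    (hXY : ∀ i, Measurable fun ω => (X i ω, Y i ω))
    (hindep : iIndepFun (fun i ω => (X i ω, Y i ω)) ℙ)
    {f : ℕ → ℝ × ℝ → ℝ}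
    (hlaw : ∀ i, Measure.map (fun ω => (X i ω, Y i ω)) ℙ
        = (volume : Measure (ℝ × ℝ)).withDensity fun p => ENNReal.ofReal (f i p))
    {a b : ℕ} (hab : a ≠ b) : ℙ {ω | X a ω = X b ω} = 0 := by
  have hX : ∀ i, Measurable (X i) := fun i => (measurable_fst.comp (hXY i))
  have hXab : IndepFun (X a) (X b) ℙ :=
    (hindep.indepFun hab).comp measurable_fst measurable_fst
  have hmap : Measure.map (fun ω => (X a ω, X b ω)) ℙ
      = (Measure.map (X a) ℙ).prod (Measure.map (X b) ℙ) :=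
    (indepFun_iff_map_prod_eq_prod_map_map (hX a).aemeasurable (hX b).aemeasurable).mp hXab
  have hdiag : MeasurableSet {p : ℝ × ℝ | p.1 = p.2} :=
    measurableSet_eq_fun measurable_fst measurable_snd
  have h1 : {ω | X a ω = X b ω} = (fun ω => (X a ω, X b ω)) ⁻¹' {p : ℝ × ℝ | p.1 = p.2} := rfl
  rw [h1, ← Measure.map_apply ((hX a).prodMk (hX b)) hdiag, hmap, Measure.prod_apply hdiag]
  have h2 : ∀ x : ℝ, (Measure.map (X b) ℙ) (Prod.mk x ⁻¹' {p : ℝ × ℝ | p.1 = p.2}) = 0 := by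
    intro x
    have h3 : Prod.mk x ⁻¹' {p : ℝ × ℝ | p.1 = p.2} = ({x} : Set ℝ) := by
      ext y; simp [eq_comm]
    rw [h3, Measure.map_apply (hX b) (measurableSet_singleton x)]
    exact atom_free hXY hlaw b x
  have h2' : ∀ x : ℝ, (Measure.map (X b) ℙ) ({x} : Set ℝ) = 0 := by
    intro x
    have h3 : ({x} : Set ℝ) = Prod.mk x ⁻¹' {p : ℝ × ℝ | p.1 = p.2} := by
      ext y; simp [eq_comm]
    rw [h3]; exact h2 x
  simp only [Set.preimage_setOf_eq]
  calc ∫⁻ x, (Measure.map (X b) ℙ) {y | x = y} ∂(Measure.map (X a) ℙ)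
      = ∫⁻ _, 0 ∂(Measure.map (X a) ℙ) := by
        apply lintegral_congr; intro x
        have : {y | x = y} = ({x} : Set ℝ) := by ext y; simp [eq_comm]
        rw [this]; exact h2' x
    _ = 0 := lintegral_zero

theorem prob_A_eq {X Y : ℕ → Ω → ℝ}
    (hXY : ∀ i, Measurable fun ω => (X i ω, Y i ω))
    (hindep : iIndepFun (fun i ω => (X i ω, Y i ω)) ℙ)
    {f : ℕ → ℝ × ℝ → ℝ}
    (hlaw : ∀ i, Measure.map (fun ω => (X i ω, Y i ω)) ℙ
        = (volume : Measure (ℝ × ℝ)).withDensity fun p => ENNReal.ofReal (f i p))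
    {a b : ℕ} (hab : a ≠ b) :
    ℙ (A X Y (a, b)) = ℙ {ω | X a ω ≤ X b ω ∧ Y a ω ≤ Y b ω} := by
  apply le_antisymm
  · exact measure_mono (fun ω hω => ⟨le_of_lt hω.1, hω.2⟩)
  · calc ℙ {ω | X a ω ≤ X b ω ∧ Y a ω ≤ Y b ω}
        ≤ ℙ (A X Y (a, b) ∪ {ω | X a ω = X b ω}) := by
          apply measure_mono
          intro ω hω
          rcases lt_or_eq_of_le hω.1 with h | h
          · exact Or.inl ⟨h, hω.2⟩
          · exact Or.inr h
      _ ≤ ℙ (A X Y (a, b)) + ℙ {ω | X a ω = X b ω} := measure_union_le _ _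
      _ = ℙ (A X Y (a, b)) := by rw [diag_null hXY hindep hlaw hab, add_zero]

theorem indep_pairs {X Y : ℕ → Ω → ℝ}
    (hXY : ∀ i, Measurable fun ω => (X i ω, Y i ω))
    (hindep : iIndepFun (fun i ω => (X i ω, Y i ω)) ℙ)
    {p q : ℕ × ℕ} (h1 : p.1 ≠ q.1) (h2 : p.1 ≠ q.2) (h3 : p.2 ≠ q.1) (h4 : p.2 ≠ q.2) :
    ℙ (A X Y p ∩ A X Y q) = ℙ (A X Y p) * ℙ (A X Y q) := by
  have hInd : IndepFun (fun ω => ((X p.1 ω, Y p.1 ω), (X p.2 ω, Y p.2 ω)))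
      (fun ω => ((X q.1 ω, Y q.1 ω), (X q.2 ω, Y q.2 ω))) ℙ :=
    hindep.indepFun_prodMk_prodMk hXY p.1 p.2 q.1 q.2 h1 h2 h3 h4
  have hS : MeasurableSet {r : (ℝ × ℝ) × (ℝ × ℝ) | r.1.1 < r.2.1 ∧ r.1.2 ≤ r.2.2} :=
    (measurableSet_lt (measurable_fst.comp measurable_fst)
        (measurable_fst.comp measurable_snd)).inter
      (measurableSet_le (measurable_snd.comp measurable_fst)
        (measurable_snd.comp measurable_snd))
  exact hInd.measure_inter_preimage_eq_mul _ _ hS hS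
noncomputable def T (X Y : ℕ → Ω → ℝ) (n : ℕ) (ω : Ω) : ℝ :=
  ∑ p ∈ (Finset.range n).offDiag, (A X Y p).indicator (fun _ => (1 : ℝ)) ω

noncomputable def m (X Y : ℕ → Ω → ℝ) (n : ℕ) : ℝ :=
  ∑ p ∈ (Finset.range n).offDiag, (ℙ (A X Y p)).toReal

theorem memℒ2_T {X Y : ℕ → Ω → ℝ}
    (hXY : ∀ i, Measurable fun ω => (X i ω, Y i ω)) (n : ℕ) :
    MemLp (T X Y n) 2 ℙ := by
  have h : ∀ p ∈ (Finset.range n).offDiag,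
      MemLp ((A X Y p).indicator (fun _ => (1 : ℝ))) 2 ℙ := fun p _ =>
    memLp_indicator_const 2 (measurableSet_A hXY p) 1 (Or.inr (measure_ne_top ℙ _))
  have he : T X Y n = ∑ p ∈ (Finset.range n).offDiag, (A X Y p).indicator (fun _ => (1 : ℝ)) := by
    funext ω; simp [T, Finset.sum_apply]
  rw [he]; exact memLp_finsetSum' _ h

theorem integral_T {X Y : ℕ → Ω → ℝ}
    (hXY : ∀ i, Measurable fun ω => (X i ω, Y i ω)) (n : ℕ) :
    ∫ ω, T X Y n ω ∂ℙ = m X Y n := by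
  unfold T m
  rw [integral_finset_sum _ (fun p _ => (integrable_const (1 : ℝ)).indicator (measurableSet_A hXY p))]
  refine Finset.sum_congr rfl fun p _ => ?_
  rw [integral_indicator_const (1 : ℝ) (measurableSet_A hXY p)]
  simp; rfl

theorem indicator_mul {X Y : ℕ → Ω → ℝ} (p q : ℕ × ℕ) (ω : Ω) :
    (A X Y p).indicator (fun _ => (1 : ℝ)) ω * (A X Y q).indicator (fun _ => (1 : ℝ)) ω
      = (A X Y p ∩ A X Y q).indicator (fun _ => (1 : ℝ)) ω := by
  classical
  by_cases hp : ω ∈ A X Y p <;> by_cases hq : ω ∈ A X Y q <;>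
    simp [Set.indicator_apply, hp, hq]

theorem variance_T_le {X Y : ℕ → Ω → ℝ}
    (hXY : ∀ i, Measurable fun ω => (X i ω, Y i ω))
    (hindep : iIndepFun (fun i ω => (X i ω, Y i ω)) ℙ)
    (n : ℕ) :
    Var[T X Y n] ≤ 4 * (n : ℝ) ^ 3 := by
  classical
  set D := (Finset.range n).offDiag with hD
  set u : ℕ × ℕ → Ω → ℝ := fun p => (A X Y p).indicator (fun _ => (1 : ℝ)) with hu
  have hmeasA := measurableSet_A hXY (Y := Y)
  have hcov : ∀ p q : ℕ × ℕ,
      ∫ ω, u p ω * u q ω ∂ℙ = (ℙ (A X Y p ∩ A X Y q)).toReal := by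
    intro p q
    have h1 : (fun ω => u p ω * u q ω)
        = (A X Y p ∩ A X Y q).indicator (fun _ => (1 : ℝ)) := by
      funext ω; exact indicator_mul p q ω
    rw [h1, integral_indicator_const (1 : ℝ) ((hmeasA p).inter (hmeasA q))]
    simp; rfl
  -- variance as double sum
  have hvar : Var[T X Y n] = ∑ p ∈ D, ∑ q ∈ D,
      ((ℙ (A X Y p ∩ A X Y q)).toReal - (ℙ (A X Y p)).toReal * (ℙ (A X Y q)).toReal) := by
    rw [variance_eq_sub (memℒ2_T hXY n), integral_T hXY n]
    have hTapp : ∀ ω, T X Y n ω = ∑ p ∈ D, u p ω := fun ω => by rw [hu, hD]; rfl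
    have hsq : (T X Y n) ^ 2 = fun ω => ∑ p ∈ D, ∑ q ∈ D, u p ω * u q ω := by
      funext ω
      have h0 : (T X Y n ^ 2) ω = T X Y n ω * T X Y n ω := by
        simp [pow_two]
      rw [h0, hTapp ω, Finset.sum_mul_sum]
    rw [hsq]
    have hint : ∀ p q : ℕ × ℕ, Integrable (fun ω => u p ω * u q ω) ℙ := by
      intro p q
      have h1 : (fun ω => u p ω * u q ω)
          = (A X Y p ∩ A X Y q).indicator (fun _ => (1 : ℝ)) := by
        funext ω; exact indicator_mul p q ω
      rw [h1]; exact (integrable_const (1 : ℝ)).indicator ((hmeasA p).inter (hmeasA q))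
    rw [integral_finset_sum _ (fun p _ => integrable_finset_sum _ (fun q _ => hint p q))]
    have h2 : ∀ p ∈ D, ∫ ω, ∑ q ∈ D, u p ω * u q ω ∂ℙ
        = ∑ q ∈ D, (ℙ (A X Y p ∩ A X Y q)).toReal := by
      intro p _
      rw [integral_finset_sum _ (fun q _ => hint p q)]
      exact Finset.sum_congr rfl fun q _ => hcov p q
    rw [Finset.sum_congr rfl h2]
    unfold m
    rw [pow_two, Finset.sum_mul_sum, ← Finset.sum_sub_distrib]
    exact Finset.sum_congr rfl fun p _ => by rw [← Finset.sum_sub_distrib]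
  rw [hvar]
  -- bound the double sum
  have hterm_le_one : ∀ p q : ℕ × ℕ,
      (ℙ (A X Y p ∩ A X Y q)).toReal - (ℙ (A X Y p)).toReal * (ℙ (A X Y q)).toReal ≤ 1 := by
    intro p q
    have h1 : (ℙ (A X Y p ∩ A X Y q)).toReal ≤ 1 := by
      have := prob_le_one (μ := (ℙ : Measure Ω)) (s := A X Y p ∩ A X Y q)
      simpa using ENNReal.toReal_mono ENNReal.one_ne_top this
    nlinarith [ENNReal.toReal_nonneg (a := ℙ (A X Y p)),
      ENNReal.toReal_nonneg (a := ℙ (A X Y q))]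
  have hzero : ∀ p ∈ D, ∀ q ∈ D,
      ¬(q.1 = p.1 ∨ q.1 = p.2 ∨ q.2 = p.1 ∨ q.2 = p.2) →
      (ℙ (A X Y p ∩ A X Y q)).toReal - (ℙ (A X Y p)).toReal * (ℙ (A X Y q)).toReal = 0 := by
    intro p _ q _ hgood
    push_neg at hgood
    obtain ⟨h1, h2, h3, h4⟩ := hgood
    rw [indep_pairs hXY hindep (Ne.symm h1) (Ne.symm h3) (Ne.symm h2) (Ne.symm h4),
      ENNReal.toReal_mul, sub_self]
  have hcard : ∀ p : ℕ × ℕ, (D.filter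
      (fun q => q.1 = p.1 ∨ q.1 = p.2 ∨ q.2 = p.1 ∨ q.2 = p.2)).card ≤ 4 * n := by
    intro p
    have hsub : D.filter (fun q => q.1 = p.1 ∨ q.1 = p.2 ∨ q.2 = p.1 ∨ q.2 = p.2)
        ⊆ ({p.1, p.2} : Finset ℕ) ×ˢ Finset.range n ∪ Finset.range n ×ˢ ({p.1, p.2} : Finset ℕ) := by
      intro q hq
      rw [Finset.mem_filter] at hq
      obtain ⟨hqD, hcases⟩ := hq
      rw [hD, Finset.mem_offDiag] at hqD
      rcases hcases with h | h | h | h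
      · exact Finset.mem_union_left _ (Finset.mem_product.2 ⟨by simp [h], hqD.2.1⟩)
      · exact Finset.mem_union_left _ (Finset.mem_product.2 ⟨by simp [h], hqD.2.1⟩)
      · exact Finset.mem_union_right _ (Finset.mem_product.2 ⟨hqD.1, by simp [h]⟩)
      · exact Finset.mem_union_right _ (Finset.mem_product.2 ⟨hqD.1, by simp [h]⟩)
    calc (D.filter _).card ≤ _ := Finset.card_le_card hsub
      _ ≤ (({p.1, p.2} : Finset ℕ) ×ˢ Finset.range n).card
          + (Finset.range n ×ˢ ({p.1, p.2} : Finset ℕ)).card := Finset.card_union_le _ _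
      _ ≤ 2 * n + n * 2 := by
          have h2 : ({p.1, p.2} : Finset ℕ).card ≤ 2 :=
            (Finset.card_insert_le _ _).trans (by simp)
          have hA : (({p.1, p.2} : Finset ℕ) ×ˢ Finset.range n).card ≤ 2 * n := by
            rw [Finset.card_product, Finset.card_range]
            exact Nat.mul_le_mul_right _ h2
          have hB : ((Finset.range n) ×ˢ ({p.1, p.2} : Finset ℕ)).card ≤ n * 2 := by
            rw [Finset.card_product, Finset.card_range]
            exact Nat.mul_le_mul_left _ h2
          omega
      _ = 4 * n := by ring
  have hinner : ∀ p ∈ D, ∑ q ∈ D,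
      ((ℙ (A X Y p ∩ A X Y q)).toReal - (ℙ (A X Y p)).toReal * (ℙ (A X Y q)).toReal)
        ≤ (4 * n : ℝ) := by
    intro p hp
    rw [← Finset.sum_filter_add_sum_filter_not D
      (fun q => q.1 = p.1 ∨ q.1 = p.2 ∨ q.2 = p.1 ∨ q.2 = p.2)]
    have hz : ∑ q ∈ D.filter (fun q => ¬(q.1 = p.1 ∨ q.1 = p.2 ∨ q.2 = p.1 ∨ q.2 = p.2)),
        ((ℙ (A X Y p ∩ A X Y q)).toReal - (ℙ (A X Y p)).toReal * (ℙ (A X Y q)).toReal) = 0 := by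
      apply Finset.sum_eq_zero
      intro q hq
      rw [Finset.mem_filter] at hq
      exact hzero p hp q hq.1 hq.2
    rw [hz, add_zero]
    calc ∑ q ∈ D.filter _, _ ≤ ∑ _q ∈ D.filter
          (fun q => q.1 = p.1 ∨ q.1 = p.2 ∨ q.2 = p.1 ∨ q.2 = p.2), (1 : ℝ) :=
        Finset.sum_le_sum fun q _ => hterm_le_one p q
      _ = (D.filter _).card • (1 : ℝ) := Finset.sum_const _
      _ ≤ (4 * n : ℝ) := by
          rw [nsmul_eq_mul, mul_one]
          exact_mod_cast hcard p
  calc ∑ p ∈ D, ∑ q ∈ D, _ ≤ ∑ _p ∈ D, (4 * n : ℝ) := Finset.sum_le_sum hinner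
    _ = D.card • (4 * n : ℝ) := Finset.sum_const _
    _ ≤ (n ^ 2 : ℝ) * (4 * n) := by
        rw [nsmul_eq_mul]
        have h1 : D.card ≤ n ^ 2 := by
          have hsub : D ⊆ Finset.range n ×ˢ Finset.range n := fun q hq =>
            Finset.mem_product.2 ⟨(Finset.mem_offDiag.1 hq).1, (Finset.mem_offDiag.1 hq).2.1⟩
          have := Finset.card_le_card hsub
          simpa [sq, Finset.card_product] using this
        have h2 : (0 : ℝ) ≤ 4 * n := by positivity
        exact mul_le_mul_of_nonneg_right (by exact_mod_cast h1) h2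
    _ = 4 * (n : ℝ) ^ 3 := by ring
theorem sum_eq {X Y : ℕ → Ω → ℝ} {n : ℕ} {ω : Ω} (π : Equiv.Perm (Fin n))
    (hmono : StrictMono fun j : Fin n => X (π j : ℕ) ω) :
    (∑ i : Fin n, ∑ j : Fin n,
        if j < i ∧ Y (π j : ℕ) ω ≤ Y (π i : ℕ) ω then (1 : ℝ) else 0)
      = T X Y n ω := by
  classical
  set g : ℕ → ℕ → ℝ := fun a b => if X a ω < X b ω ∧ Y a ω ≤ Y b ω then 1 else 0 with hg
  have hstep1 : ∀ i j : Fin n,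
      (if j < i ∧ Y (π j : ℕ) ω ≤ Y (π i : ℕ) ω then (1 : ℝ) else 0)
        = g (π j : ℕ) (π i : ℕ) := by
    intro i j
    rw [hg]
    simp only []
    refine if_congr ?_ rfl rfl
    constructor
    · rintro ⟨h1, h2⟩; exact ⟨hmono h1, h2⟩
    · rintro ⟨h1, h2⟩; exact ⟨hmono.lt_iff_lt.mp h1, h2⟩
  have hL2 : (∑ i : Fin n, ∑ j : Fin n, g (j : ℕ) (i : ℕ))
      = ∑ i ∈ Finset.range n, ∑ j ∈ Finset.range n, g j i := by
    rw [← Fin.sum_univ_eq_sum_range (fun i => ∑ j ∈ Finset.range n, g j i) n]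
    refine Finset.sum_congr rfl fun i _ => ?_
    rw [← Fin.sum_univ_eq_sum_range (fun j => g j (i : ℕ)) n]
  have hL15 : (∑ i : Fin n, ∑ j : Fin n,
      if j < i ∧ Y (π j : ℕ) ω ≤ Y (π i : ℕ) ω then (1 : ℝ) else 0)
      = ∑ i : Fin n, ∑ j : Fin n, g ((π j : Fin n) : ℕ) ((π i : Fin n) : ℕ) := by
    refine Finset.sum_congr rfl fun i _ => Finset.sum_congr rfl fun j _ => hstep1 i j
  -- now handle the outer permutation
  have hL16 : (∑ i : Fin n, ∑ j : Fin n, g ((π j : Fin n) : ℕ) ((π i : Fin n) : ℕ))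
      = ∑ i : Fin n, ∑ j : Fin n, g (j : ℕ) (i : ℕ) := by
    have hin : ∀ i : Fin n, (∑ j : Fin n, g ((π j : Fin n) : ℕ) ((i : Fin n) : ℕ))
        = ∑ j : Fin n, g (j : ℕ) (i : ℕ) := fun i =>
      Equiv.sum_comp π (fun j : Fin n => g (j : ℕ) (i : ℕ))
    calc (∑ i : Fin n, ∑ j : Fin n, g ((π j : Fin n) : ℕ) ((π i : Fin n) : ℕ))
        = ∑ i : Fin n, ∑ j : Fin n, g (j : ℕ) ((π i : Fin n) : ℕ) := by
          refine Finset.sum_congr rfl fun i _ => ?_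
          exact Equiv.sum_comp π (fun j : Fin n => g (j : ℕ) ((π i : Fin n) : ℕ))
      _ = ∑ i : Fin n, ∑ j : Fin n, g (j : ℕ) (i : ℕ) :=
          Equiv.sum_comp π (fun i : Fin n => ∑ j : Fin n, g (j : ℕ) (i : ℕ))
  have hT : T X Y n ω = ∑ p ∈ (Finset.range n).offDiag, g p.1 p.2 := by
    unfold T
    refine Finset.sum_congr rfl fun p _ => ?_
    rw [Set.indicator_apply]
    by_cases h : ω ∈ A X Y p
    · rw [if_pos h]; exact (if_pos h).symm
    · rw [if_neg h]; exact (if_neg h).symm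
  have hoff : (∑ p ∈ (Finset.range n).offDiag, g p.1 p.2)
      = ∑ p ∈ Finset.range n ×ˢ Finset.range n, g p.1 p.2 := by
    apply Finset.sum_subset
    · intro q hq
      exact Finset.mem_product.2 ⟨(Finset.mem_offDiag.1 hq).1, (Finset.mem_offDiag.1 hq).2.1⟩
    · intro q hq hnq
      have hq1 : q.1 = q.2 := by
        by_contra hne
        exact hnq (Finset.mem_offDiag.2
          ⟨(Finset.mem_product.1 hq).1, (Finset.mem_product.1 hq).2, hne⟩)
      rw [hg]
      simp only []
      rw [if_neg]
      rw [hq1]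
      intro hcon
      exact lt_irrefl _ hcon.1
  rw [hL15, hL16, hL2, hT, hoff, Finset.sum_product]
  exact Finset.sum_comm

theorem tau_seq_eq {X Y : ℕ → Ω → ℝ}
    (hXY : ∀ i, Measurable fun ω => (X i ω, Y i ω))
    (hindep : iIndepFun (fun i ω => (X i ω, Y i ω)) ℙ)
    {f : ℕ → ℝ × ℝ → ℝ}
    (hlaw : ∀ i, Measure.map (fun ω => (X i ω, Y i ω)) ℙ
        = (volume : Measure (ℝ × ℝ)).withDensity fun p => ENNReal.ofReal (f i p))
    (n : ℕ) :
    (∑ i ∈ Finset.range n, ∑ j ∈ Finset.range n,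
        if j ≠ i then (ℙ {ω | X j ω ≤ X i ω ∧ Y j ω ≤ Y i ω}).toReal else 0)
      = m X Y n := by
  classical
  have h1 : m X Y n = ∑ p ∈ (Finset.range n).offDiag,
      (if p.1 ≠ p.2 then (ℙ {ω | X p.1 ω ≤ X p.2 ω ∧ Y p.1 ω ≤ Y p.2 ω}).toReal else 0) := by
    unfold m
    refine Finset.sum_congr rfl fun p hp => ?_
    have hne : p.1 ≠ p.2 := (Finset.mem_offDiag.1 hp).2.2
    rw [if_pos hne, ← prob_A_eq hXY hindep hlaw hne]
  rw [h1]
  rw [Finset.sum_subset (fun q hq => Finset.mem_product.2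
      ⟨(Finset.mem_offDiag.1 hq).1, (Finset.mem_offDiag.1 hq).2.1⟩)
    (fun q hq hnq => by
      have hq1 : q.1 = q.2 := by
        by_contra hne
        exact hnq (Finset.mem_offDiag.2
          ⟨(Finset.mem_product.1 hq).1, (Finset.mem_product.1 hq).2, hne⟩)
      rw [if_neg (by simpa using hq1)])]
  rw [Finset.sum_product]
  rw [Finset.sum_comm]

end RKAux

open MeasureTheory ProbabilityTheory Filter RKAux in
/-- For a sequence of independent random vectors `(X_i, Y_i)`, `i ≥ 1`, with
absolutely continuous bivariate distributions (given by densities `f i`), if the theoretical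
Kendall correlation coefficients `τ_n = 4 ∑_{i≠j} P(X_j ≤ X_i, Y_j ≤ Y_i)/(n(n-1)) - 1`
converge to `τ`, then the rank Kendall correlation coefficient
`τ̃_n = 4 ∑_{j<i} I(Y_{j,n} ≤ Y_{i,n}) / (n(n-1)) - 1` (built from the concomitants of the
order statistics of the first `n` observations of the `X`-sample, encoded by a.s. sorting
permutations `σ n ω`) converges in probability to `τ`:
for every `ε > 0`, `P(|τ̃_n − τ| > ε) → 0` as `n → ∞`. -/
theorem rank_kendall_tendsto_in_probability
    {Ω : Type*} [MeasureSpace Ω] [IsProbabilityMeasure (ℙ : Measure Ω)]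
    (X Y : ℕ → Ω → ℝ)
    (hXY : ∀ i, Measurable fun ω => (X i ω, Y i ω))
    (hindep : iIndepFun (fun i ω => (X i ω, Y i ω)) ℙ)
    (f : ℕ → ℝ × ℝ → ℝ)
    (hf_meas : ∀ i, Measurable (f i))
    (hf_nonneg : ∀ i p, 0 ≤ f i p)
    (hlaw : ∀ i, Measure.map (fun ω => (X i ω, Y i ω)) ℙ
        = (volume : Measure (ℝ × ℝ)).withDensity fun p => ENNReal.ofReal (f i p))
    (σ : (n : ℕ) → Ω → Equiv.Perm (Fin n))
    (hσ : ∀ n : ℕ, ∀ᵐ ω ∂ℙ, StrictMono fun j : Fin n => X (σ n ω j : ℕ) ω)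
    (τ : ℝ)
    (hτ : Tendsto (fun n : ℕ =>
        4 * (∑ i ∈ Finset.range n, ∑ j ∈ Finset.range n,
            if j ≠ i then (ℙ {ω | X j ω ≤ X i ω ∧ Y j ω ≤ Y i ω}).toReal else 0)
          / (n * (n - 1)) - 1)
      atTop (nhds τ)) :
    ∀ ε > (0 : ℝ),
      Tendsto (fun n : ℕ =>
          ℙ {ω | ε < |4 * (∑ i : Fin n, ∑ j : Fin n,
              if j < i ∧ Y (σ n ω j : ℕ) ω ≤ Y (σ n ω i : ℕ) ω then (1 : ℝ) else 0)
            / (n * (n - 1)) - 1 - τ|})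
        atTop (nhds 0) := by
  intro ε hε
  classical
  -- the deterministic sequence
  set τseq : ℕ → ℝ := fun n => 4 * m X Y n / (n * (n - 1)) - 1 with hτseq
  have hτ' : Tendsto τseq atTop (nhds τ) := by
    apply hτ.congr
    intro n
    rw [hτseq]
    simp only []
    rw [tau_seq_eq hXY hindep hlaw n]
  -- replace the stated event by the event for T
  have hmeas_eq : ∀ n : ℕ,
      ℙ {ω | ε < |4 * (∑ i : Fin n, ∑ j : Fin n,
          if j < i ∧ Y (σ n ω j : ℕ) ω ≤ Y (σ n ω i : ℕ) ω then (1 : ℝ) else 0)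
        / (n * (n - 1)) - 1 - τ|}
      = ℙ {ω | ε < |4 * T X Y n ω / (n * (n - 1)) - 1 - τ|} := by
    intro n
    apply measure_congr
    filter_upwards [hσ n] with ω hmono
    have hs := sum_eq (Y := Y) (σ n ω) hmono
    show (ε < |4 * (∑ i : Fin n, ∑ j : Fin n,
          if j < i ∧ Y (σ n ω j : ℕ) ω ≤ Y (σ n ω i : ℕ) ω then (1 : ℝ) else 0)
        / (n * (n - 1)) - 1 - τ|)
      = (ε < |4 * T X Y n ω / (n * (n - 1)) - 1 - τ|)
    rw [hs]
  rw [show (fun n : ℕ => ℙ {ω | ε < |4 * (∑ i : Fin n, ∑ j : Fin n,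
        if j < i ∧ Y (σ n ω j : ℕ) ω ≤ Y (σ n ω i : ℕ) ω then (1 : ℝ) else 0)
      / (n * (n - 1)) - 1 - τ|})
    = fun n : ℕ => ℙ {ω | ε < |4 * T X Y n ω / (n * (n - 1)) - 1 - τ|}
    from funext hmeas_eq]
  -- eventual closeness of τseq
  have hN1 : ∀ᶠ n in atTop, |τseq n - τ| < ε / 2 := by
    have h0 : Tendsto (fun n => |τseq n - τ|) atTop (nhds 0) := by
      have := (hτ'.sub (tendsto_const_nhds (x := τ))).abs
      simpa using this
    exact h0.eventually (gt_mem_nhds (by linarith))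
  -- the Chebyshev bound
  have hbound : ∀ᶠ n in atTop,
      ℙ {ω | ε < |4 * T X Y n ω / (n * (n - 1)) - 1 - τ|}
        ≤ ENNReal.ofReal (256 * n / (ε ^ 2 * ((n : ℝ) - 1) ^ 2)) := by
    filter_upwards [hN1, eventually_ge_atTop 2] with n hn1 hn2
    have hn2' : (2 : ℝ) ≤ (n : ℝ) := by exact_mod_cast hn2
    have hn1pos : (0 : ℝ) < (n : ℝ) - 1 := by linarith
    have hnn1 : (0 : ℝ) < (n : ℝ) * ((n : ℝ) - 1) := by nlinarith
    set c : ℝ := ε * ((n : ℝ) * ((n : ℝ) - 1)) / 8 with hc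
    have hcpos : 0 < c := by rw [hc]; positivity
    have hsub : {ω | ε < |4 * T X Y n ω / (n * (n - 1)) - 1 - τ|}
        ⊆ {ω | c ≤ |T X Y n ω - ∫ ω', T X Y n ω' ∂ℙ|} := by
      intro ω hω
      rw [Set.mem_setOf_eq] at hω ⊢
      rw [integral_T hXY n]
      have hdecomp : 4 * T X Y n ω / ((n : ℝ) * ((n : ℝ) - 1)) - 1 - τ
          = 4 * (T X Y n ω - m X Y n) / ((n : ℝ) * ((n : ℝ) - 1)) + (τseq n - τ) := by
        rw [hτseq]
        field_simp
        ring
      by_contra hlt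
      push_neg at hlt
      have habs : |4 * (T X Y n ω - m X Y n) / ((n : ℝ) * ((n : ℝ) - 1))|
          = 4 * |T X Y n ω - m X Y n| / ((n : ℝ) * ((n : ℝ) - 1)) := by
        rw [abs_div, abs_of_pos hnn1, abs_mul]
        norm_num
      have h1 : ε < 4 * |T X Y n ω - m X Y n| / ((n : ℝ) * ((n : ℝ) - 1)) + |τseq n - τ| := by
        calc ε < |4 * T X Y n ω / ((n : ℝ) * ((n : ℝ) - 1)) - 1 - τ| := hω
          _ = |4 * (T X Y n ω - m X Y n) / ((n : ℝ) * ((n : ℝ) - 1)) + (τseq n - τ)| := by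
              rw [hdecomp]
          _ ≤ |4 * (T X Y n ω - m X Y n) / ((n : ℝ) * ((n : ℝ) - 1))| + |τseq n - τ| :=
              abs_add_le _ _
          _ = _ := by rw [habs]
      have h3 : ε / 2 < 4 * |T X Y n ω - m X Y n| / ((n : ℝ) * ((n : ℝ) - 1)) := by
        linarith
      have h4 : ε / 2 * ((n : ℝ) * ((n : ℝ) - 1)) < 4 * |T X Y n ω - m X Y n| :=
        (lt_div_iff₀ hnn1).mp h3
      have h5 : 4 * |T X Y n ω - m X Y n| < 4 * c := by linarith
      have h6 : 4 * c = ε / 2 * ((n : ℝ) * ((n : ℝ) - 1)) := by rw [hc]; ring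
      linarith
    calc ℙ {ω | ε < |4 * T X Y n ω / (n * (n - 1)) - 1 - τ|}
        ≤ ℙ {ω | c ≤ |T X Y n ω - ∫ ω', T X Y n ω' ∂ℙ|} := measure_mono hsub
      _ ≤ ENNReal.ofReal (Var[T X Y n] / c ^ 2) :=
          meas_ge_le_variance_div_sq (memℒ2_T hXY n) hcpos
      _ ≤ ENNReal.ofReal (256 * n / (ε ^ 2 * ((n : ℝ) - 1) ^ 2)) := by
          apply ENNReal.ofReal_le_ofReal
          have hvar := variance_T_le hXY hindep n
          have hc2 : (0 : ℝ) < c ^ 2 := by positivity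
          have hle : Var[T X Y n] / c ^ 2 ≤ (4 * (n : ℝ) ^ 3) / c ^ 2 := by
            gcongr
          have hd2 : (0 : ℝ) < ε ^ 2 * ((n : ℝ) - 1) ^ 2 :=
            mul_pos (pow_pos hε 2) (pow_pos hn1pos 2)
          have h9 : (4 * (n : ℝ) ^ 3) / c ^ 2 = 256 * n / (ε ^ 2 * ((n : ℝ) - 1) ^ 2) := by
            rw [hc, div_eq_div_iff (by positivity) (ne_of_gt hd2)]
            ring
          linarith [hle, h9.le, h9.ge]
  -- the bound tends to zero
  have hBtend : Tendsto (fun n : ℕ => ENNReal.ofReal (256 * n / (ε ^ 2 * ((n : ℝ) - 1) ^ 2)))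
      atTop (nhds 0) := by
    have h0 : Tendsto (fun n : ℕ => 256 * (n : ℝ) / (ε ^ 2 * ((n : ℝ) - 1) ^ 2))
        atTop (nhds 0) := by
      have h1 : Tendsto (fun n : ℕ => (n : ℝ) - 1) atTop atTop :=
        tendsto_atTop_add_const_right _ (-1) tendsto_natCast_atTop_atTop
      have h2 : Tendsto (fun n : ℕ => ((n : ℝ) - 1)⁻¹) atTop (nhds 0) :=
        h1.inv_tendsto_atTop
      have hup : Tendsto (fun n : ℕ => 512 / ε ^ 2 * ((n : ℝ) - 1)⁻¹) atTop (nhds 0) := by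
        simpa using h2.const_mul (512 / ε ^ 2)
      apply squeeze_zero' ?_ ?_ hup
      · filter_upwards [eventually_ge_atTop 2] with n hn
        have hn2' : (2 : ℝ) ≤ (n : ℝ) := by exact_mod_cast hn
        have hn1pos : (0 : ℝ) < (n : ℝ) - 1 := by linarith
        positivity
      · filter_upwards [eventually_ge_atTop 2] with n hn
        have hn2' : (2 : ℝ) ≤ (n : ℝ) := by exact_mod_cast hn
        have hn1pos : (0 : ℝ) < (n : ℝ) - 1 := by linarith
        have hd2 : (0 : ℝ) < ε ^ 2 * ((n : ℝ) - 1) ^ 2 :=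
          mul_pos (pow_pos hε 2) (pow_pos hn1pos 2)
        have hrhs : 512 / ε ^ 2 * ((n : ℝ) - 1)⁻¹ = 512 * ((n : ℝ) - 1) / (ε ^ 2 * ((n : ℝ) - 1) ^ 2) := by
          field_simp
        rw [hrhs, div_le_div_iff₀ hd2 hd2]
        nlinarith [pow_pos hε 2, hn1pos]
    have := ENNReal.tendsto_ofReal h0
    simpa using this
  exact tendsto_of_tendsto_of_tendsto_of_le_of_le' tendsto_const_nhds hBtend
    (Eventually.of_forall fun n => zero_le) hbound
end

section
/- Let (X_1,Y_1),...,(X_n,Y_n) be independent random vectors with absolutely continuous bivariate distribution functions, and let τ̃_n be the rank Kendall correlation coefficient. Then Var(τ̃_n) ≤ 16 (n(n-1)/2 + n(n-1)(n-2)) / (n-1)^4; consequently Var(τ̃_n) → 0 as n → ∞. -/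
open MeasureTheory ProbabilityTheory Filter

lemma my_aux1 (x y : ℝ) : x * y ≤ (x ^ 2 + y ^ 2) / 2 := by nlinarith [sq_nonneg (x - y)]

lemma my_aux2 (t : ℝ) (h0 : 0 ≤ t) (h1 : t ≤ 1) : t - 2 * t * t + t ^ 2 ≤ 1 / 4 := by nlinarith [sq_nonneg (t - 1/2)]

lemma my_core {Ω : Type*} [MeasureSpace Ω] [IsProbabilityMeasure (ℙ : Measure Ω)]
    (X Y : ℕ → Ω → ℝ)
    (hXY : ∀ i, Measurable fun ω => (X i ω, Y i ω))
    (hindep : iIndepFun (fun i ω => (X i ω, Y i ω)) ℙ)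
    (n : ℕ) (hn : 2 ≤ n) :
    variance (fun ω => 4 * (∑ a : Fin n, ∑ b : Fin n,
        if X (a : ℕ) ω < X (b : ℕ) ω ∧ Y (a : ℕ) ω ≤ Y (b : ℕ) ω then (1 : ℝ) else 0)
        / (n * (n - 1)) - 1) ℙ ≤ 16 / ((n : ℝ) - 1) := by
  have hXm : ∀ i, Measurable (X i) := fun i => (measurable_fst.comp (hXY i) : _)
  have hYm : ∀ i, Measurable (Y i) := fun i => (measurable_snd.comp (hXY i) : _)
  set μ : Measure Ω := ℙ with hμ
  -- the pair indicators
  let W : Fin n → Fin n → Ω → ℝ := fun a b ω =>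
    if X (a : ℕ) ω < X (b : ℕ) ω ∧ Y (a : ℕ) ω ≤ Y (b : ℕ) ω then 1 else 0
  have hWmeas : ∀ a b, Measurable (W a b) := by
    intro a b
    have hset : MeasurableSet {ω | X (a : ℕ) ω < X (b : ℕ) ω ∧ Y (a : ℕ) ω ≤ Y (b : ℕ) ω} :=
      (measurableSet_lt (hXm a) (hXm b)).inter (measurableSet_le (hYm a) (hYm b))
    exact Measurable.ite hset measurable_const measurable_const
  have hW0 : ∀ a b ω, 0 ≤ W a b ω := by
    intro a b ω; simp only [W]; split <;> norm_num
  have hW1 : ∀ a b ω, W a b ω ≤ 1 := by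
    intro a b ω; simp only [W]; split <;> norm_num
  have hWsq : ∀ a b ω, W a b ω ^ 2 = W a b ω := by
    intro a b ω; simp only [W]; split <;> norm_num
  have hWint : ∀ a b, Integrable (W a b) μ := fun a b =>
    (integrable_const (1 : ℝ)).mono' (hWmeas a b).aestronglyMeasurable
      (Eventually.of_forall fun ω => by
        rw [Real.norm_eq_abs, abs_of_nonneg (hW0 a b ω)]; exact hW1 a b ω)
  -- means
  set m : Fin n → Fin n → ℝ := fun a b => ∫ ω, W a b ω ∂μ with hm
  have hm0 : ∀ a b, 0 ≤ m a b := fun a b => integral_nonneg (hW0 a b)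
  have hm1 : ∀ a b, m a b ≤ 1 := by
    intro a b
    calc m a b ≤ ∫ _ω, (1 : ℝ) ∂μ := integral_mono (hWint a b) (integrable_const 1) (hW1 a b)
    _ = 1 := by simp
  -- centered indicators
  set G : Fin n → Fin n → Ω → ℝ := fun a b ω => W a b ω - m a b with hG
  have hGmeas : ∀ a b, Measurable (G a b) := fun a b => (hWmeas a b).sub measurable_const
  have hGb : ∀ a b ω, |G a b ω| ≤ 1 := fun a b ω =>
    abs_le.mpr ⟨by simp only [G]; linarith [hW0 a b ω, hm1 a b],
                by simp only [G]; linarith [hW1 a b ω, hm0 a b]⟩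
  have hGint : ∀ a b, Integrable (G a b) μ := fun a b => (hWint a b).sub (integrable_const _)
  have hGint0 : ∀ a b, ∫ ω, G a b ω ∂μ = 0 := by
    intro a b
    simp only [G]
    rw [integral_sub (hWint a b) (integrable_const _), integral_const]
    simp [hm]
  have hWdiag : ∀ a ω, W a a ω = 0 := fun a ω => by simp [W]
  have hGdiag : ∀ a ω, G a a ω = 0 := by
    intro a ω
    simp only [G, hm]
    simp [hWdiag]
  -- integrability of products
  have hGGint : ∀ a b c d, Integrable (fun ω => G a b ω * G c d ω) μ := fun a b c d =>
    (integrable_const (1 : ℝ)).mono' ((hGmeas a b).mul (hGmeas c d)).aestronglyMeasurable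
      (Eventually.of_forall fun ω => by
        rw [Real.norm_eq_abs, abs_mul]
        exact mul_le_one₀ (hGb a b ω) (abs_nonneg _) (hGb c d ω))
  have hGsqint : ∀ a b, Integrable (fun ω => (G a b ω) ^ 2) μ := fun a b => by
    simpa [pow_two] using hGGint a b a b
  -- second moment of centered indicator
  have hGsq : ∀ a b, ∫ ω, (G a b ω) ^ 2 ∂μ ≤ 1 / 4 := by
    intro a b
    have hpt : (fun ω => (G a b ω) ^ 2)
        = fun ω => W a b ω - 2 * m a b * W a b ω + (m a b) ^ 2 := by
      funext ω
      have h := hWsq a b ω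
      simp only [G]
      nlinarith [hWsq a b ω]
    have hf1 : Integrable (fun ω => W a b ω - 2 * m a b * W a b ω) μ :=
      (hWint a b).sub ((hWint a b).const_mul _)
    have hf2 : Integrable (fun ω => 2 * m a b * W a b ω) μ := (hWint a b).const_mul _
    have hmab : ∫ ω, W a b ω ∂μ = m a b := rfl
    rw [hpt, integral_add hf1 (integrable_const _), integral_sub (hWint a b) hf2,
      integral_const_mul, integral_const, hmab]
    simp only [probReal_univ, one_smul]
    exact my_aux2 (m a b) (hm0 a b) (hm1 a b)
  -- covariance bound
  have hGG14 : ∀ a b c d, ∫ ω, G a b ω * G c d ω ∂μ ≤ 1 / 4 := by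
    intro a b c d
    have hpt : ∀ ω, G a b ω * G c d ω ≤ ((G a b ω) ^ 2 + (G c d ω) ^ 2) / 2 :=
      fun ω => my_aux1 (G a b ω) (G c d ω)
    calc ∫ ω, G a b ω * G c d ω ∂μ
        ≤ ∫ ω, ((G a b ω) ^ 2 + (G c d ω) ^ 2) / 2 ∂μ :=
          integral_mono (hGGint a b c d) (((hGsqint a b).add (hGsqint c d)).div_const 2) hpt
      _ = ((∫ ω, (G a b ω) ^ 2 ∂μ) + ∫ ω, (G c d ω) ^ 2 ∂μ) / 2 := by
          rw [integral_div, integral_add (hGsqint a b) (hGsqint c d)]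
      _ ≤ 1 / 4 := by linarith [hGsq a b, hGsq c d]
  -- independence: disjoint pairs have zero covariance
  have hGGzero : ∀ a b c d : Fin n, a ≠ c → a ≠ d → b ≠ c → b ≠ d →
      ∫ ω, G a b ω * G c d ω ∂μ = 0 := by
    intro a b c d hac had hbc hbd
    have hbase : IndepFun (fun ω => ((X (a : ℕ) ω, Y (a : ℕ) ω), (X (b : ℕ) ω, Y (b : ℕ) ω)))
        (fun ω => ((X (c : ℕ) ω, Y (c : ℕ) ω), (X (d : ℕ) ω, Y (d : ℕ) ω))) μ :=
      hindep.indepFun_prodMk_prodMk hXY _ _ _ _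
        (fun h => hac (Fin.val_injective h)) (fun h => had (Fin.val_injective h))
        (fun h => hbc (Fin.val_injective h)) (fun h => hbd (Fin.val_injective h))
    have hφ : ∀ t : ℝ, Measurable (fun pq : (ℝ × ℝ) × (ℝ × ℝ) =>
        (if pq.1.1 < pq.2.1 ∧ pq.1.2 ≤ pq.2.2 then (1 : ℝ) else 0) - t) := by
      intro t
      refine Measurable.sub ?_ measurable_const
      refine Measurable.ite ?_ measurable_const measurable_const
      exact (measurableSet_lt (measurable_fst.fst) (measurable_snd.fst)).inter
        (measurableSet_le (measurable_fst.snd) (measurable_snd.snd))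
    have hind : IndepFun (G a b) (G c d) μ := hbase.comp (hφ (m a b)) (hφ (m c d))
    have h : ∫ ω, G a b ω * G c d ω ∂μ = (∫ ω, G a b ω ∂μ) * ∫ ω, G c d ω ∂μ :=
      hind.integral_fun_mul_eq_mul_integral (hGint a b).1 (hGint c d).1
    rw [h, hGint0, zero_mul]
  -- arithmetic setup
  have hx : (2 : ℝ) ≤ (n : ℝ) := by exact_mod_cast hn
  have hn0 : (0 : ℝ) < (n : ℝ) := by linarith
  have hn1 : (0 : ℝ) < (n : ℝ) - 1 := by linarith
  set c : ℝ := 4 / ((n : ℝ) * ((n : ℝ) - 1)) with hc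
  set S : Ω → ℝ := fun ω => ∑ a : Fin n, ∑ b : Fin n, W a b ω with hS
  have hSint : Integrable S μ :=
    integrable_finset_sum _ fun a _ => integrable_finset_sum _ fun b _ => hWint a b
  have hSmeas : Measurable S :=
    Finset.measurable_sum _ fun a _ => Finset.measurable_sum _ fun b _ => hWmeas a b
  -- rewrite the goal function
  have hTfun : (fun ω => 4 * (∑ a : Fin n, ∑ b : Fin n,
      if X (a : ℕ) ω < X (b : ℕ) ω ∧ Y (a : ℕ) ω ≤ Y (b : ℕ) ω then (1 : ℝ) else 0)
      / (n * (n - 1)) - 1) = fun ω => c * S ω - 1 := by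
    funext ω
    have hSω : S ω = ∑ a : Fin n, ∑ b : Fin n,
        if X (a : ℕ) ω < X (b : ℕ) ω ∧ Y (a : ℕ) ω ≤ Y (b : ℕ) ω then (1 : ℝ) else 0 := rfl
    rw [hSω, hc]
    ring
  rw [hTfun]
  -- L² membership
  have hSbd : ∀ ω, ‖S ω‖ ≤ (n : ℝ) ^ 2 := by
    intro ω
    have h0 : 0 ≤ S ω := Finset.sum_nonneg fun a _ => Finset.sum_nonneg fun b _ => hW0 a b ω
    have h1 : S ω ≤ (n : ℝ) ^ 2 := by
      calc S ω ≤ ∑ _a : Fin n, ∑ _b : Fin n, (1 : ℝ) :=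
            Finset.sum_le_sum fun a _ => Finset.sum_le_sum fun b _ => hW1 a b ω
        _ = (n : ℝ) ^ 2 := by
            rw [Finset.sum_const, Finset.sum_const, Finset.card_univ, Fintype.card_fin,
              nsmul_eq_mul, nsmul_eq_mul]
            ring
    rw [Real.norm_eq_abs, abs_of_nonneg h0]
    exact h1
  have hS2 : MemLp S 2 μ :=
    MemLp.of_bound hSmeas.aestronglyMeasurable ((n : ℝ) ^ 2) (Eventually.of_forall hSbd)
  have hX2 : MemLp (fun ω => c * S ω - 1) 2 μ := (hS2.const_mul c).sub (memLp_const (1 : ℝ))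
  have hve : variance (fun ω => c * S ω - 1) μ
      = ∫ x, ((((fun ω => c * S ω - 1) - fun _ => ∫ x, (c * S x - 1) ∂μ : Ω → ℝ)) ^ 2) x ∂μ :=
    variance_eq_integral hX2.aestronglyMeasurable.aemeasurable
  rw [hve]
  -- compute the mean
  have hES : ∫ ω, (c * S ω - 1) ∂μ = c * (∫ ω, S ω ∂μ) - 1 := by
    rw [integral_sub (hSint.const_mul c) (integrable_const 1), integral_const_mul, integral_const]
    simp
  have hESsum : ∫ ω, S ω ∂μ = ∑ a : Fin n, ∑ b : Fin n, m a b := by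
    have h1 : ∫ ω, S ω ∂μ = ∫ ω, ∑ a : Fin n, ∑ b : Fin n, W a b ω ∂μ := rfl
    rw [h1, integral_finset_sum _ fun a _ => integrable_finset_sum _ fun b _ => hWint a b]
    exact Finset.sum_congr rfl fun a _ => integral_finset_sum _ fun b _ => hWint a b
  -- pointwise identity for the centered square
  have hkey : ∀ ω, ((((fun ω => c * S ω - 1) - fun _ => ∫ x, (c * S x - 1) ∂μ : Ω → ℝ)) ^ 2) ω
      = c ^ 2 * (∑ p : Fin n × Fin n, G p.1 p.2 ω) ^ 2 := by
    intro ω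
    have h1 : ((((fun ω => c * S ω - 1) - fun _ => ∫ x, (c * S x - 1) ∂μ : Ω → ℝ)) ^ 2) ω
        = (c * S ω - 1 - ∫ x, (c * S x - 1) ∂μ) ^ 2 := rfl
    have h2 : (∑ p : Fin n × Fin n, G p.1 p.2 ω) = S ω - ∫ x, S x ∂μ := by
      rw [Fintype.sum_prod_type]
      have hGW : ∀ a b : Fin n, G a b ω = W a b ω - m a b := fun a b => rfl
      calc (∑ a : Fin n, ∑ b : Fin n, G a b ω)
          = ∑ a : Fin n, ((∑ b : Fin n, W a b ω) - ∑ b : Fin n, m a b) := by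
            refine Finset.sum_congr rfl fun a _ => ?_
            rw [← Finset.sum_sub_distrib]
        _ = (∑ a : Fin n, ∑ b : Fin n, W a b ω) - ∑ a : Fin n, ∑ b : Fin n, m a b := by
            rw [← Finset.sum_sub_distrib]
        _ = S ω - ∫ x, S x ∂μ := by rw [hESsum]
    rw [h1, hES, h2]
    ring
  have hre : ∫ x, ((((fun ω => c * S ω - 1) - fun _ => ∫ x, (c * S x - 1) ∂μ : Ω → ℝ)) ^ 2) x ∂μ
      = ∫ ω, c ^ 2 * (∑ p : Fin n × Fin n, G p.1 p.2 ω) ^ 2 ∂μ :=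
    integral_congr_ae (Eventually.of_forall hkey)
  rw [hre, integral_const_mul]
  -- expand the square of the sum
  have hexp : ∫ ω, (∑ p : Fin n × Fin n, G p.1 p.2 ω) ^ 2 ∂μ
      = ∑ p : Fin n × Fin n, ∑ q : Fin n × Fin n, ∫ ω, G p.1 p.2 ω * G q.1 q.2 ω ∂μ := by
    have h1 : (fun ω => (∑ p : Fin n × Fin n, G p.1 p.2 ω) ^ 2)
        = fun ω => ∑ p : Fin n × Fin n, ∑ q : Fin n × Fin n, G p.1 p.2 ω * G q.1 q.2 ω := by
      funext ω
      rw [sq, Finset.sum_mul_sum]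
    rw [h1, integral_finset_sum _ fun p _ =>
      integrable_finset_sum _ fun q _ => hGGint p.1 p.2 q.1 q.2]
    exact Finset.sum_congr rfl fun p _ => integral_finset_sum _ fun q _ => hGGint p.1 p.2 q.1 q.2
  -- termwise covariance bound
  have hite_nonneg : ∀ (P : Prop) [Decidable P], (0 : ℝ) ≤ if P then (1/4 : ℝ) else 0 := by
    intro P inst; split <;> norm_num
  have hterm : ∀ p q : Fin n × Fin n, ∫ ω, G p.1 p.2 ω * G q.1 q.2 ω ∂μ ≤
      (if p.1 = p.2 then (0 : ℝ) else
        (if p.1 = q.1 then (1/4 : ℝ) else 0) + (if p.1 = q.2 then (1/4 : ℝ) else 0) +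
        ((if p.2 = q.1 then (1/4 : ℝ) else 0) + (if p.2 = q.2 then (1/4 : ℝ) else 0))) := by
    intro p q
    by_cases hp : p.1 = p.2
    · rw [if_pos hp]
      have hz : (fun ω => G p.1 p.2 ω * G q.1 q.2 ω) = fun _ => (0 : ℝ) := by
        funext ω
        rw [hp, hGdiag, zero_mul]
      rw [hz, integral_zero]
    · rw [if_neg hp]
      have hb := hGG14 p.1 p.2 q.1 q.2
      have n1 := hite_nonneg (p.1 = q.1)
      have n2 := hite_nonneg (p.1 = q.2)
      have n3 := hite_nonneg (p.2 = q.1)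
      have n4 := hite_nonneg (p.2 = q.2)
      by_cases h1 : p.1 = q.1
      · rw [if_pos h1]; linarith
      by_cases h2 : p.1 = q.2
      · rw [if_pos h2]; linarith
      by_cases h3 : p.2 = q.1
      · rw [if_pos h3]; linarith
      by_cases h4 : p.2 = q.2
      · rw [if_pos h4]; linarith
      rw [if_neg h1, if_neg h2, if_neg h3, if_neg h4]
      simp only [add_zero]
      exact le_of_eq (hGGzero p.1 p.2 q.1 q.2 h1 h2 h3 h4)
  -- counting
  have hsumA : ∀ x : Fin n, (∑ q : Fin n × Fin n, if x = q.1 then (1/4 : ℝ) else 0)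
      = (n : ℝ) / 4 := by
    intro x
    rw [Fintype.sum_prod_type]
    calc (∑ a : Fin n, ∑ _b : Fin n, if x = a then (1/4 : ℝ) else 0)
        = ∑ a : Fin n, (n : ℝ) * (if x = a then (1/4 : ℝ) else 0) := by
          refine Finset.sum_congr rfl fun a _ => ?_
          rw [Finset.sum_const, Finset.card_univ, Fintype.card_fin, nsmul_eq_mul]
      _ = (n : ℝ) * ∑ a : Fin n, (if x = a then (1/4 : ℝ) else 0) := by rw [Finset.mul_sum]
      _ = (n : ℝ) / 4 := by
          rw [Finset.sum_ite_eq, if_pos (Finset.mem_univ x)]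
          ring
  have hsumB : ∀ x : Fin n, (∑ q : Fin n × Fin n, if x = q.2 then (1/4 : ℝ) else 0)
      = (n : ℝ) / 4 := by
    intro x
    rw [Fintype.sum_prod_type]
    calc (∑ _a : Fin n, ∑ b : Fin n, if x = b then (1/4 : ℝ) else 0)
        = ∑ _a : Fin n, (1/4 : ℝ) := by
          refine Finset.sum_congr rfl fun a _ => ?_
          rw [Finset.sum_ite_eq, if_pos (Finset.mem_univ x)]
      _ = (n : ℝ) / 4 := by
          rw [Finset.sum_const, Finset.card_univ, Fintype.card_fin, nsmul_eq_mul]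
          ring
  have hinner : ∀ p : Fin n × Fin n, (∑ q : Fin n × Fin n,
      (if p.1 = p.2 then (0 : ℝ) else
        (if p.1 = q.1 then (1/4 : ℝ) else 0) + (if p.1 = q.2 then (1/4 : ℝ) else 0) +
        ((if p.2 = q.1 then (1/4 : ℝ) else 0) + (if p.2 = q.2 then (1/4 : ℝ) else 0))))
      = (if p.1 = p.2 then (0 : ℝ) else (n : ℝ)) := by
    intro p
    by_cases hp : p.1 = p.2
    · simp [hp]
    · simp only [if_neg hp]
      rw [Finset.sum_add_distrib, Finset.sum_add_distrib, Finset.sum_add_distrib,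
        hsumA p.1, hsumB p.1, hsumA p.2, hsumB p.2]
      ring
  have houter : (∑ p : Fin n × Fin n, (if p.1 = p.2 then (0 : ℝ) else (n : ℝ)))
      = (n : ℝ) ^ 3 - (n : ℝ) ^ 2 := by
    rw [Fintype.sum_prod_type]
    have hrow : ∀ a : Fin n, (∑ b : Fin n, if a = b then (0 : ℝ) else (n : ℝ))
        = (n : ℝ) * (n : ℝ) - (n : ℝ) := by
      intro a
      have hpt : ∀ b : Fin n, (if a = b then (0 : ℝ) else (n : ℝ))
          = (n : ℝ) - (if a = b then (n : ℝ) else 0) := by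
        intro b; split <;> ring
      rw [Finset.sum_congr rfl fun b _ => hpt b, Finset.sum_sub_distrib, Finset.sum_const,
        Finset.card_univ, Fintype.card_fin, nsmul_eq_mul, Finset.sum_ite_eq,
        if_pos (Finset.mem_univ a)]
    rw [Finset.sum_congr rfl fun a _ => hrow a, Finset.sum_const, Finset.card_univ,
      Fintype.card_fin, nsmul_eq_mul]
    ring
  -- put everything together
  have hVle : ∫ ω, (∑ p : Fin n × Fin n, G p.1 p.2 ω) ^ 2 ∂μ ≤ (n : ℝ) ^ 3 - (n : ℝ) ^ 2 := by
    rw [hexp]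
    calc (∑ p : Fin n × Fin n, ∑ q : Fin n × Fin n, ∫ ω, G p.1 p.2 ω * G q.1 q.2 ω ∂μ)
        ≤ ∑ p : Fin n × Fin n, ∑ q : Fin n × Fin n,
          (if p.1 = p.2 then (0 : ℝ) else
            (if p.1 = q.1 then (1/4 : ℝ) else 0) + (if p.1 = q.2 then (1/4 : ℝ) else 0) +
            ((if p.2 = q.1 then (1/4 : ℝ) else 0) + (if p.2 = q.2 then (1/4 : ℝ) else 0))) :=
          Finset.sum_le_sum fun p _ => Finset.sum_le_sum fun q _ => hterm p q
      _ = ∑ p : Fin n × Fin n, (if p.1 = p.2 then (0 : ℝ) else (n : ℝ)) :=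
          Finset.sum_congr rfl fun p _ => hinner p
      _ = (n : ℝ) ^ 3 - (n : ℝ) ^ 2 := houter
  calc c ^ 2 * ∫ ω, (∑ p : Fin n × Fin n, G p.1 p.2 ω) ^ 2 ∂μ
      ≤ c ^ 2 * ((n : ℝ) ^ 3 - (n : ℝ) ^ 2) := mul_le_mul_of_nonneg_left hVle (sq_nonneg c)
    _ = 16 / ((n : ℝ) - 1) := by
        rw [hc]
        field_simp
        ring


/-- variance only depends on the a.e. class. -/
lemma my_variance_congr {Ω : Type*} [MeasurableSpace Ω] {μ : Measure Ω} {f g : Ω → ℝ}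
    (h : f =ᵐ[μ] g) : variance f μ = variance g μ := by
  have hi : μ[f] = μ[g] := integral_congr_ae h
  unfold variance evariance
  rw [hi]
  refine congrArg ENNReal.toReal (lintegral_congr_ae (h.mono fun ω hω => ?_))
  dsimp only
  rw [hω]


/-- For independent random vectors `(X_1,Y_1), …, (X_n,Y_n)` with absolutely
continuous bivariate distributions (given by densities `f i`), the rank Kendall correlation
coefficient `τ̃_n = 4 ∑_{j<i} I(Y_{j,n} ≤ Y_{i,n}) / (n(n-1)) - 1` (expressed through the
concomitants of the order statistics of the `X`-sample, encoded by a.s. sorting permutations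
`σ n ω`) satisfies `Var(τ̃_n) ≤ 16 (n(n-1)/2 + n(n-1)(n-2)) / (n-1)^4` for every `n ≥ 2`;
consequently `Var(τ̃_n) → 0` as `n → ∞`. -/
theorem variance_rank_kendall_bound
    {Ω : Type*} [MeasureSpace Ω] [IsProbabilityMeasure (ℙ : Measure Ω)]
    (X Y : ℕ → Ω → ℝ)
    (hXY : ∀ i, Measurable fun ω => (X i ω, Y i ω))
    (hindep : iIndepFun (fun i ω => (X i ω, Y i ω)) ℙ)
    (f : ℕ → ℝ × ℝ → ℝ)
    (hf_meas : ∀ i, Measurable (f i))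
    (hf_nonneg : ∀ i p, 0 ≤ f i p)
    (hlaw : ∀ i, Measure.map (fun ω => (X i ω, Y i ω)) ℙ
        = (volume : Measure (ℝ × ℝ)).withDensity fun p => ENNReal.ofReal (f i p))
    (σ : (n : ℕ) → Ω → Equiv.Perm (Fin n))
    (hσ : ∀ n : ℕ, ∀ᵐ ω ∂ℙ, StrictMono fun j : Fin n => X (σ n ω j : ℕ) ω)
    (τRank : (n : ℕ) → Ω → ℝ)
    (hτRank : ∀ (n : ℕ) (ω : Ω), τRank n ω =
        4 * (∑ i : Fin n, ∑ j : Fin n,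
            if j < i ∧ Y (σ n ω j : ℕ) ω ≤ Y (σ n ω i : ℕ) ω then (1 : ℝ) else 0)
          / (n * (n - 1)) - 1) :
    (∀ n : ℕ, 2 ≤ n →
      variance (τRank n) ℙ
        ≤ 16 * ((n : ℝ) * ((n : ℝ) - 1) / 2 + (n : ℝ) * ((n : ℝ) - 1) * ((n : ℝ) - 2))
            / ((n : ℝ) - 1) ^ 4)
    ∧ Tendsto (fun n : ℕ => variance (τRank n) ℙ) atTop (nhds 0) := by
  -- a.e. identification of τRank with the measurable statistic
  have hae : ∀ n : ℕ, τRank n =ᵐ[ℙ] fun ω => 4 * (∑ a : Fin n, ∑ b : Fin n,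
      if X (a : ℕ) ω < X (b : ℕ) ω ∧ Y (a : ℕ) ω ≤ Y (b : ℕ) ω then (1 : ℝ) else 0)
      / (n * (n - 1)) - 1 := by
    intro n
    filter_upwards [hσ n] with ω hs
    rw [hτRank n ω]
    have h1 : (∑ i : Fin n, ∑ j : Fin n,
          if j < i ∧ Y (σ n ω j : ℕ) ω ≤ Y (σ n ω i : ℕ) ω then (1 : ℝ) else 0)
        = ∑ i : Fin n, ∑ j : Fin n,
          if X (σ n ω j : ℕ) ω < X (σ n ω i : ℕ) ω ∧ Y (σ n ω j : ℕ) ω ≤ Y (σ n ω i : ℕ) ω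
          then (1 : ℝ) else 0 := by
      refine Finset.sum_congr rfl fun i _ => Finset.sum_congr rfl fun j _ => ?_
      exact if_congr (and_congr_left' (hs.lt_iff_lt).symm) rfl rfl
    have h2 : ∀ i : Fin n, (∑ j : Fin n,
          if X (σ n ω j : ℕ) ω < X (σ n ω i : ℕ) ω ∧ Y (σ n ω j : ℕ) ω ≤ Y (σ n ω i : ℕ) ω
          then (1 : ℝ) else 0)
        = ∑ b : Fin n, if X (b : ℕ) ω < X (σ n ω i : ℕ) ω ∧ Y (b : ℕ) ω ≤ Y (σ n ω i : ℕ) ω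
          then (1 : ℝ) else 0 := fun i =>
      Equiv.sum_comp (σ n ω) (fun b => if X (b : ℕ) ω < X (σ n ω i : ℕ) ω ∧
        Y (b : ℕ) ω ≤ Y (σ n ω i : ℕ) ω then (1 : ℝ) else 0)
    have h3 : (∑ i : Fin n, ∑ b : Fin n,
          if X (b : ℕ) ω < X (σ n ω i : ℕ) ω ∧ Y (b : ℕ) ω ≤ Y (σ n ω i : ℕ) ω
          then (1 : ℝ) else 0)
        = ∑ a : Fin n, ∑ b : Fin n,
          if X (b : ℕ) ω < X (a : ℕ) ω ∧ Y (b : ℕ) ω ≤ Y (a : ℕ) ω then (1 : ℝ) else 0 :=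
      Equiv.sum_comp (σ n ω) (fun a => ∑ b : Fin n, if X (b : ℕ) ω < X (a : ℕ) ω ∧
        Y (b : ℕ) ω ≤ Y (a : ℕ) ω then (1 : ℝ) else 0)
    have h4 : (∑ a : Fin n, ∑ b : Fin n,
          if X (b : ℕ) ω < X (a : ℕ) ω ∧ Y (b : ℕ) ω ≤ Y (a : ℕ) ω then (1 : ℝ) else 0)
        = ∑ a : Fin n, ∑ b : Fin n,
          if X (a : ℕ) ω < X (b : ℕ) ω ∧ Y (a : ℕ) ω ≤ Y (b : ℕ) ω then (1 : ℝ) else 0 :=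
      Finset.sum_comm
    rw [h1, Finset.sum_congr rfl (fun i _ => h2 i), h3, h4]
  have hvar : ∀ n : ℕ, 2 ≤ n → variance (τRank n) ℙ ≤ 16 / ((n : ℝ) - 1) := by
    intro n hn
    rw [my_variance_congr (hae n)]
    exact my_core X Y hXY hindep n hn
  have hmain : ∀ n : ℕ, 2 ≤ n →
      variance (τRank n) ℙ
        ≤ 16 * ((n : ℝ) * ((n : ℝ) - 1) / 2 + (n : ℝ) * ((n : ℝ) - 1) * ((n : ℝ) - 2))
            / ((n : ℝ) - 1) ^ 4 := by
    intro n hn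
    refine (hvar n hn).trans ?_
    have hx : (2 : ℝ) ≤ (n : ℝ) := by exact_mod_cast hn
    have h1 : (0 : ℝ) < (n : ℝ) - 1 := by linarith
    rw [div_le_div_iff₀ h1 (by positivity)]
    nlinarith [sq_nonneg ((n : ℝ) - 1), sq_nonneg ((n : ℝ) - 2)]
  refine ⟨hmain, ?_⟩
  refine squeeze_zero' (g := fun n : ℕ => 16 / ((n : ℝ) - 1)) ?_ ?_ ?_
  · exact Eventually.of_forall fun n => variance_nonneg _ _
  · filter_upwards [eventually_ge_atTop 2] with n hn
    exact hvar n hn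
  · have ht : Tendsto (fun n : ℕ => ((n : ℝ) - 1)) atTop atTop := by
      have h := tendsto_atTop_add_const_right atTop (-1 : ℝ) tendsto_natCast_atTop_atTop
      simpa [sub_eq_add_neg] using h
    exact Tendsto.div_atTop tendsto_const_nhds ht
end

section
/- Let (X_1,Y_1),...,(X_n,Y_n) be independent random vectors with absolutely continuous bivariate distribution functions, let I_{ji} = I(Y_{j,n} ≤ Y_{i,n}) be concomitant comparison indicators, and let p_{mk} = P(X_k ≤ X_m, Y_k ≤ Y_m). Then E[(Σ_{1≤j<i≤n} I_{ji})²] ≤ (Σ_{k=1}^{n} Σ_{m≠k} p_{mk})² + n(n-1)/2 + n(n-1)(n-2). -/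
open MeasureTheory ProbabilityTheory
set_option linter.unusedSectionVars false

open Finset

namespace SMBound

lemma sum_ite_ne {n : ℕ} (t : Fin n) :
    ∑ x : Fin n, (if x ≠ t then (1:ℝ) else 0) = (n:ℝ) - 1 := by
  rw [Finset.sum_boole]
  have h1 : (Finset.univ.filter fun x : Fin n => x ≠ t) = Finset.univ \ {t} := by
    ext x; simp
  rw [h1, Finset.card_sdiff_of_subset (by simp), Finset.card_univ, Fintype.card_fin,
    Finset.card_singleton]
  have hn : 1 ≤ n := t.pos
  push_cast [Nat.cast_sub hn]
  ring

lemma sum_ite_ne_ne {n : ℕ} {t l : Fin n} (h : t ≠ l) :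
    ∑ x : Fin n, (if x ≠ t ∧ x ≠ l then (1:ℝ) else 0) = (n:ℝ) - 2 := by
  rw [Finset.sum_boole]
  have h1 : (Finset.univ.filter fun x : Fin n => x ≠ t ∧ x ≠ l) = Finset.univ \ {t, l} := by
    ext x; simp [not_or]
  rw [h1, Finset.card_sdiff_of_subset (by simp)]
  have hcard : ({t, l} : Finset (Fin n)).card = 2 := by
    rw [Finset.card_insert_of_notMem (by simpa using h), Finset.card_singleton]
  have hn : 2 ≤ n := by
    have := Finset.card_le_card (Finset.subset_univ ({t, l} : Finset (Fin n)))
    simpa [hcard] using this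
  rw [hcard, Finset.card_univ, Fintype.card_fin]
  push_cast [Nat.cast_sub hn]
  ring

lemma sum_lt_pairs (n : ℕ) :
    ∑ t : Fin n, ∑ l : Fin n, (if t < l then (1:ℝ) else 0)
      = (n:ℝ) * ((n:ℝ) - 1) / 2 := by
  have hswap : ∑ t : Fin n, ∑ l : Fin n, (if t < l then (1:ℝ) else 0)
      = ∑ t : Fin n, ∑ l : Fin n, (if l < t then (1:ℝ) else 0) := by
    rw [Finset.sum_comm]
  have hsum : (∑ t : Fin n, ∑ l : Fin n, (if t < l then (1:ℝ) else 0))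
      + (∑ t : Fin n, ∑ l : Fin n, (if l < t then (1:ℝ) else 0))
      = (n:ℝ) * ((n:ℝ) - 1) := by
    rw [← Finset.sum_add_distrib]
    simp only [← Finset.sum_add_distrib]
    have : ∀ t : Fin n, ∑ l : Fin n,
        ((if t < l then (1:ℝ) else 0) + (if l < t then (1:ℝ) else 0))
        = (n:ℝ) - 1 := by
      intro t
      rw [← sum_ite_ne t]
      refine Finset.sum_congr rfl fun l _ => ?_
      rcases lt_trichotomy t l with h | h | h
      · simp [h, lt_asymm h, (ne_of_lt h).symm]
      · simp [h, lt_irrefl]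
      · simp [h, lt_asymm h, ne_of_lt h]
    rw [Finset.sum_congr rfl fun t _ => this t]
    rw [Finset.sum_const, Finset.card_univ, Fintype.card_fin, nsmul_eq_mul]
  linarith [hswap, hsum]

end SMBound

namespace SMBound

lemma ite_nn (c : Prop) [Decidable c] : (0:ℝ) ≤ if c then 1 else 0 := by
  split <;> norm_num

lemma ite_le_one (c : Prop) [Decidable c] : (if c then (1:ℝ) else 0) ≤ 1 := by
  split <;> norm_num

lemma overlap_le {n : ℕ} (t l w s : Fin n) :
    (if t < l ∧ w < s ∧ ¬(t ≠ w ∧ t ≠ s ∧ l ≠ w ∧ l ≠ s) then (1:ℝ) else 0)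
      ≤ (if t < l ∧ w = t ∧ s = l then (1:ℝ) else 0)
      + (if (t < l ∧ t < s ∧ l ≠ s) ∧ w = t then (1:ℝ) else 0)
      + (if (t < l ∧ w < t) ∧ s = t then (1:ℝ) else 0)
      + (if (t < l ∧ l < s) ∧ w = l then (1:ℝ) else 0)
      + (if (t < l ∧ w < l ∧ w ≠ t) ∧ s = l then (1:ℝ) else 0) := by
  by_cases H : t < l ∧ w < s ∧ ¬(t ≠ w ∧ t ≠ s ∧ l ≠ w ∧ l ≠ s)
  · rw [if_pos H]
    have hd : (t < l ∧ w = t ∧ s = l) ∨ ((t < l ∧ t < s ∧ l ≠ s) ∧ w = t)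
        ∨ ((t < l ∧ w < t) ∧ s = t) ∨ ((t < l ∧ l < s) ∧ w = l)
        ∨ ((t < l ∧ w < l ∧ w ≠ t) ∧ s = l) := by
      obtain ⟨h1, h2, h3⟩ := H
      simp only [Fin.lt_def, ne_eq, Fin.ext_iff, not_and_or, not_not] at *
      omega
    rcases hd with h | h | h | h | h <;> rw [if_pos h] <;>
      linarith [ite_nn (t < l ∧ w = t ∧ s = l),
        ite_nn ((t < l ∧ t < s ∧ l ≠ s) ∧ w = t),
        ite_nn ((t < l ∧ w < t) ∧ s = t),
        ite_nn ((t < l ∧ l < s) ∧ w = l),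
        ite_nn ((t < l ∧ w < l ∧ w ≠ t) ∧ s = l)]
  · rw [if_neg H]
    have h1 := ite_nn (t < l ∧ w = t ∧ s = l)
    have h2 := ite_nn ((t < l ∧ t < s ∧ l ≠ s) ∧ w = t)
    have h3 := ite_nn ((t < l ∧ w < t) ∧ s = t)
    have h4 := ite_nn ((t < l ∧ l < s) ∧ w = l)
    have h5 := ite_nn ((t < l ∧ w < l ∧ w ≠ t) ∧ s = l)
    linarith

lemma sum_pin {α : Type*} [Fintype α] [DecidableEq α] (A : Prop) [Decidable A] (t : α) :
    ∑ w : α, (if A ∧ w = t then (1:ℝ) else 0) = if A then 1 else 0 := by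
  by_cases hA : A <;> simp [hA]

lemma ind_add1 {n : ℕ} (t l x : Fin n) :
    (if (t < l ∧ t < x ∧ l ≠ x) then (1:ℝ) else 0) + (if (t < l ∧ x < t) then (1:ℝ) else 0)
      = if t < l ∧ x ≠ t ∧ x ≠ l then 1 else 0 := by
  have hiff : (t < l ∧ x ≠ t ∧ x ≠ l) ↔ ((t < l ∧ t < x ∧ l ≠ x) ∨ (t < l ∧ x < t)) := by
    simp only [Fin.lt_def, ne_eq, Fin.ext_iff]
    omega
  have hnot : ¬((t < l ∧ t < x ∧ l ≠ x) ∧ (t < l ∧ x < t)) := by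
    simp only [Fin.lt_def, ne_eq, Fin.ext_iff]
    omega
  by_cases h1 : t < l ∧ t < x ∧ l ≠ x <;> by_cases h2 : t < l ∧ x < t
  · exact absurd ⟨h1, h2⟩ hnot
  · rw [if_pos h1, if_neg h2, if_pos (hiff.mpr (Or.inl h1))]; ring
  · rw [if_neg h1, if_pos h2, if_pos (hiff.mpr (Or.inr h2))]; ring
  · rw [if_neg h1, if_neg h2, if_neg (fun h => (hiff.mp h).elim h1 h2)]; ring

lemma ind_add2 {n : ℕ} (t l x : Fin n) :
    (if (t < l ∧ l < x) then (1:ℝ) else 0) + (if (t < l ∧ x < l ∧ x ≠ t) then (1:ℝ) else 0)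
      = if t < l ∧ x ≠ t ∧ x ≠ l then 1 else 0 := by
  have hiff : (t < l ∧ x ≠ t ∧ x ≠ l) ↔ ((t < l ∧ l < x) ∨ (t < l ∧ x < l ∧ x ≠ t)) := by
    simp only [Fin.lt_def, ne_eq, Fin.ext_iff]
    omega
  have hnot : ¬((t < l ∧ l < x) ∧ (t < l ∧ x < l ∧ x ≠ t)) := by
    simp only [Fin.lt_def, ne_eq, Fin.ext_iff]
    omega
  by_cases h1 : t < l ∧ l < x <;> by_cases h2 : t < l ∧ x < l ∧ x ≠ t
  · exact absurd ⟨h1, h2⟩ hnot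
  · rw [if_pos h1, if_neg h2, if_pos (hiff.mpr (Or.inl h1))]; ring
  · rw [if_neg h1, if_pos h2, if_pos (hiff.mpr (Or.inr h2))]; ring
  · rw [if_neg h1, if_neg h2, if_neg (fun h => (hiff.mp h).elim h1 h2)]; ring

lemma sum_guarded (n : ℕ) :
    ∑ t : Fin n, ∑ l : Fin n, ∑ x : Fin n,
        (if t < l ∧ x ≠ t ∧ x ≠ l then (1:ℝ) else 0)
      = ((n:ℝ) - 2) * ((n:ℝ) * ((n:ℝ) - 1) / 2) := by
  rw [← sum_lt_pairs n, Finset.mul_sum]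
  refine Finset.sum_congr rfl fun t _ => ?_
  rw [Finset.mul_sum]
  refine Finset.sum_congr rfl fun l _ => ?_
  by_cases h : t < l
  · rw [if_pos h]
    have : ∑ x : Fin n, (if t < l ∧ x ≠ t ∧ x ≠ l then (1:ℝ) else 0)
        = ∑ x : Fin n, (if x ≠ t ∧ x ≠ l then (1:ℝ) else 0) := by
      refine Finset.sum_congr rfl fun x _ => by simp [h]
    rw [this, sum_ite_ne_ne (ne_of_lt h)]
    ring
  · simp [h]

lemma count_le (n : ℕ) :
    ∑ t : Fin n, ∑ l : Fin n, ∑ w : Fin n, ∑ s : Fin n,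
        (if t < l ∧ w < s ∧ ¬(t ≠ w ∧ t ≠ s ∧ l ≠ w ∧ l ≠ s) then (1:ℝ) else 0)
      ≤ (n:ℝ) * ((n:ℝ) - 1) / 2 + (n:ℝ) * ((n:ℝ) - 1) * ((n:ℝ) - 2) := by
  have step1 : ∑ t : Fin n, ∑ l : Fin n, ∑ w : Fin n, ∑ s : Fin n,
        (if t < l ∧ w < s ∧ ¬(t ≠ w ∧ t ≠ s ∧ l ≠ w ∧ l ≠ s) then (1:ℝ) else 0)
      ≤ ∑ t : Fin n, ∑ l : Fin n, ∑ w : Fin n, ∑ s : Fin n,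
        ((if t < l ∧ w = t ∧ s = l then (1:ℝ) else 0)
        + (if (t < l ∧ t < s ∧ l ≠ s) ∧ w = t then (1:ℝ) else 0)
        + (if (t < l ∧ w < t) ∧ s = t then (1:ℝ) else 0)
        + (if (t < l ∧ l < s) ∧ w = l then (1:ℝ) else 0)
        + (if (t < l ∧ w < l ∧ w ≠ t) ∧ s = l then (1:ℝ) else 0)) := by
    refine Finset.sum_le_sum fun t _ => Finset.sum_le_sum fun l _ =>
      Finset.sum_le_sum fun w _ => Finset.sum_le_sum fun s _ => overlap_le t l w s
  refine step1.trans ?_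
  -- split the big sum into five sums
  simp only [Finset.sum_add_distrib]
  -- evaluate each of the five sums
  have S1 : ∑ t : Fin n, ∑ l : Fin n, ∑ w : Fin n, ∑ s : Fin n,
      (if t < l ∧ w = t ∧ s = l then (1:ℝ) else 0)
      = (n:ℝ) * ((n:ℝ) - 1) / 2 := by
    rw [← sum_lt_pairs n]
    refine Finset.sum_congr rfl fun t _ => Finset.sum_congr rfl fun l _ => ?_
    have : ∀ w : Fin n, ∑ s : Fin n, (if t < l ∧ w = t ∧ s = l then (1:ℝ) else 0)
        = if (t < l ∧ w = t) then 1 else 0 := by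
      intro w
      rw [← sum_pin (t < l ∧ w = t) l]
      exact Finset.sum_congr rfl fun s _ => by simp [and_assoc]
    rw [Finset.sum_congr rfl fun w _ => this w, sum_pin (t < l) t]
  have S2 : ∑ t : Fin n, ∑ l : Fin n, ∑ w : Fin n, ∑ s : Fin n,
      (if (t < l ∧ t < s ∧ l ≠ s) ∧ w = t then (1:ℝ) else 0)
      = ∑ t : Fin n, ∑ l : Fin n, ∑ x : Fin n,
        (if t < l ∧ t < x ∧ l ≠ x then (1:ℝ) else 0) := by
    refine Finset.sum_congr rfl fun t _ => Finset.sum_congr rfl fun l _ => ?_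
    rw [Finset.sum_comm]
    exact Finset.sum_congr rfl fun s _ => sum_pin _ t
  have S3 : ∑ t : Fin n, ∑ l : Fin n, ∑ w : Fin n, ∑ s : Fin n,
      (if (t < l ∧ w < t) ∧ s = t then (1:ℝ) else 0)
      = ∑ t : Fin n, ∑ l : Fin n, ∑ x : Fin n,
        (if t < l ∧ x < t then (1:ℝ) else 0) := by
    refine Finset.sum_congr rfl fun t _ => Finset.sum_congr rfl fun l _ =>
      Finset.sum_congr rfl fun w _ => ?_
    exact sum_pin _ t
  have S4 : ∑ t : Fin n, ∑ l : Fin n, ∑ w : Fin n, ∑ s : Fin n,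
      (if (t < l ∧ l < s) ∧ w = l then (1:ℝ) else 0)
      = ∑ t : Fin n, ∑ l : Fin n, ∑ x : Fin n,
        (if t < l ∧ l < x then (1:ℝ) else 0) := by
    refine Finset.sum_congr rfl fun t _ => Finset.sum_congr rfl fun l _ => ?_
    rw [Finset.sum_comm]
    exact Finset.sum_congr rfl fun s _ => sum_pin _ l
  have S5 : ∑ t : Fin n, ∑ l : Fin n, ∑ w : Fin n, ∑ s : Fin n,
      (if (t < l ∧ w < l ∧ w ≠ t) ∧ s = l then (1:ℝ) else 0)
      = ∑ t : Fin n, ∑ l : Fin n, ∑ x : Fin n,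
        (if t < l ∧ x < l ∧ x ≠ t then (1:ℝ) else 0) := by
    refine Finset.sum_congr rfl fun t _ => Finset.sum_congr rfl fun l _ =>
      Finset.sum_congr rfl fun w _ => ?_
    exact sum_pin _ l
  rw [S1, S2, S3, S4, S5]
  have S23 : (∑ t : Fin n, ∑ l : Fin n, ∑ x : Fin n,
        (if t < l ∧ t < x ∧ l ≠ x then (1:ℝ) else 0))
      + (∑ t : Fin n, ∑ l : Fin n, ∑ x : Fin n,
        (if t < l ∧ x < t then (1:ℝ) else 0))
      = ((n:ℝ) - 2) * ((n:ℝ) * ((n:ℝ) - 1) / 2) := by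
    rw [← sum_guarded n, ← Finset.sum_add_distrib]
    refine Finset.sum_congr rfl fun t _ => ?_
    rw [← Finset.sum_add_distrib]
    refine Finset.sum_congr rfl fun l _ => ?_
    rw [← Finset.sum_add_distrib]
    exact Finset.sum_congr rfl fun x _ => ind_add1 t l x
  have S45 : (∑ t : Fin n, ∑ l : Fin n, ∑ x : Fin n,
        (if t < l ∧ l < x then (1:ℝ) else 0))
      + (∑ t : Fin n, ∑ l : Fin n, ∑ x : Fin n,
        (if t < l ∧ x < l ∧ x ≠ t then (1:ℝ) else 0))
      = ((n:ℝ) - 2) * ((n:ℝ) * ((n:ℝ) - 1) / 2) := by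
    rw [← sum_guarded n, ← Finset.sum_add_distrib]
    refine Finset.sum_congr rfl fun t _ => ?_
    rw [← Finset.sum_add_distrib]
    refine Finset.sum_congr rfl fun l _ => ?_
    rw [← Finset.sum_add_distrib]
    exact Finset.sum_congr rfl fun x _ => ind_add2 t l x
  nlinarith [S23, S45]

end SMBound

namespace SMBound

open MeasureTheory ProbabilityTheory

variable {Ω : Type*} [MeasureSpace Ω] [IsProbabilityMeasure (ℙ : Measure Ω)]
variable {n : ℕ}

/-- strict comparison event -/
def evA (X Y : Fin n → Ω → ℝ) (t l : Fin n) : Set Ω :=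
  {ω | X t ω < X l ω ∧ Y t ω ≤ Y l ω}

/-- weak comparison event -/
def evB (X Y : Fin n → Ω → ℝ) (t l : Fin n) : Set Ω :=
  {ω | X t ω ≤ X l ω ∧ Y t ω ≤ Y l ω}

/-- indicator of the strict comparison event -/
noncomputable def Ff (X Y : Fin n → Ω → ℝ) (t l : Fin n) : Ω → ℝ :=
  fun ω => if X t ω < X l ω ∧ Y t ω ≤ Y l ω then 1 else 0

/-- symmetrized indicator, guarded by `t < l` -/
noncomputable def GHf (X Y : Fin n → Ω → ℝ) (t l : Fin n) : Ω → ℝ :=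
  fun ω => if t < l then Ff X Y t l ω + Ff X Y l t ω else 0

variable {X Y : Fin n → Ω → ℝ}

lemma measurable_evA (hXY : ∀ i, Measurable fun ω => (X i ω, Y i ω)) (t l : Fin n) :
    MeasurableSet (evA X Y t l) := by
  have hX : ∀ i, Measurable (X i) := fun i => measurable_fst.comp (hXY i)
  have hY : ∀ i, Measurable (Y i) := fun i => measurable_snd.comp (hXY i)
  exact (measurableSet_lt (hX t) (hX l)).inter (measurableSet_le (hY t) (hY l))

lemma Ff_eq_indicator (t l : Fin n) :
    Ff X Y t l = (evA X Y t l).indicator (fun _ => (1:ℝ)) := by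
  ext ω
  simp [Ff, evA, Set.indicator_apply, Set.mem_setOf_eq]

lemma Ff_nonneg (t l : Fin n) (ω : Ω) : 0 ≤ Ff X Y t l ω := ite_nn _

lemma Ff_le_one (t l : Fin n) (ω : Ω) : Ff X Y t l ω ≤ 1 := ite_le_one _

lemma Ff_mul_eq_indicator (t l w s : Fin n) :
    (fun ω => Ff X Y t l ω * Ff X Y w s ω)
      = (evA X Y t l ∩ evA X Y w s).indicator (fun _ => (1:ℝ)) := by
  ext ω
  by_cases h1 : ω ∈ evA X Y t l <;> by_cases h2 : ω ∈ evA X Y w s <;>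
    simp [Ff_eq_indicator, Set.indicator_apply, h1, h2, Set.mem_inter_iff]

lemma integrable_Ff_mul (hXY : ∀ i, Measurable fun ω => (X i ω, Y i ω)) (t l w s : Fin n) :
    Integrable (fun ω => Ff X Y t l ω * Ff X Y w s ω) ℙ := by
  rw [Ff_mul_eq_indicator]
  exact (integrable_const (1:ℝ)).indicator ((measurable_evA hXY t l).inter (measurable_evA hXY w s))

lemma integral_Ff_mul (hXY : ∀ i, Measurable fun ω => (X i ω, Y i ω)) (t l w s : Fin n) :
    ∫ ω, Ff X Y t l ω * Ff X Y w s ω ∂ℙ = (ℙ (evA X Y t l ∩ evA X Y w s)).toReal := by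
  rw [Ff_mul_eq_indicator,
    integral_indicator_const (1:ℝ) ((measurable_evA hXY t l).inter (measurable_evA hXY w s))]
  simp [Measure.real]

lemma indep_evA (hindep : iIndepFun (fun i ω => (X i ω, Y i ω)) ℙ)
    (hXY : ∀ i, Measurable fun ω => (X i ω, Y i ω))
    {t l w s : Fin n} (h1 : t ≠ w) (h2 : t ≠ s) (h3 : l ≠ w) (h4 : l ≠ s) :
    ℙ (evA X Y t l ∩ evA X Y w s) = ℙ (evA X Y t l) * ℙ (evA X Y w s) := by
  have h := hindep.indepFun_prodMk_prodMk hXY t l w s h1 h2 h3 h4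
  have hCm : MeasurableSet {q : (ℝ × ℝ) × ℝ × ℝ | q.1.1 < q.2.1 ∧ q.1.2 ≤ q.2.2} :=
    (measurableSet_lt (measurable_fst.comp measurable_fst)
        (measurable_fst.comp measurable_snd)).inter
      (measurableSet_le (measurable_snd.comp measurable_fst)
        (measurable_snd.comp measurable_snd))
  exact h.measure_inter_preimage_eq_mul _ _ hCm hCm

lemma toReal_le_evB (t l : Fin n) :
    (ℙ (evA X Y t l)).toReal ≤ (ℙ (evB X Y t l)).toReal := by
  refine ENNReal.toReal_mono (measure_ne_top _ _) (measure_mono fun ω hω => ?_)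
  exact ⟨le_of_lt hω.1, hω.2⟩

lemma int_Ff_mul_le (hindep : iIndepFun (fun i ω => (X i ω, Y i ω)) ℙ)
    (hXY : ∀ i, Measurable fun ω => (X i ω, Y i ω))
    {t l w s : Fin n} (h1 : t ≠ w) (h2 : t ≠ s) (h3 : l ≠ w) (h4 : l ≠ s) :
    ∫ ω, Ff X Y t l ω * Ff X Y w s ω ∂ℙ
      ≤ (ℙ (evB X Y t l)).toReal * (ℙ (evB X Y w s)).toReal := by
  rw [integral_Ff_mul hXY, indep_evA hindep hXY h1 h2 h3 h4, ENNReal.toReal_mul]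
  exact mul_le_mul (toReal_le_evB t l) (toReal_le_evB w s) ENNReal.toReal_nonneg
    ENNReal.toReal_nonneg

lemma GHf_nonneg (t l : Fin n) (ω : Ω) : 0 ≤ GHf X Y t l ω := by
  unfold GHf
  split
  · exact add_nonneg (Ff_nonneg t l ω) (Ff_nonneg l t ω)
  · exact le_refl 0

lemma GHf_le_one (t l : Fin n) (ω : Ω) : GHf X Y t l ω ≤ 1 := by
  unfold GHf
  split
  · unfold Ff
    by_cases h1 : X t ω < X l ω ∧ Y t ω ≤ Y l ω <;>
      by_cases h2 : X l ω < X t ω ∧ Y l ω ≤ Y t ω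
    · exact absurd (lt_trans h1.1 h2.1) (lt_irrefl _)
    · simp [h1, h2]
    · simp [h1, h2]
    · simp [h1, h2]
  · norm_num

lemma measurable_GHf (hXY : ∀ i, Measurable fun ω => (X i ω, Y i ω)) (t l : Fin n) :
    Measurable (GHf X Y t l) := by
  unfold GHf
  split
  · rw [Ff_eq_indicator, Ff_eq_indicator]
    exact ((measurable_const.indicator (measurable_evA hXY t l)).add
      (measurable_const.indicator (measurable_evA hXY l t)))
  · exact measurable_const

lemma integrable_GHf_mul (hXY : ∀ i, Measurable fun ω => (X i ω, Y i ω)) (t l w s : Fin n) :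
    Integrable (fun ω => GHf X Y t l ω * GHf X Y w s ω) ℙ := by
  refine Integrable.mono' (integrable_const (1:ℝ))
    (((measurable_GHf hXY t l).mul (measurable_GHf hXY w s)).aestronglyMeasurable) ?_
  refine Filter.Eventually.of_forall fun ω => ?_
  rw [Real.norm_eq_abs, abs_of_nonneg (mul_nonneg (GHf_nonneg t l ω) (GHf_nonneg w s ω))]
  calc GHf X Y t l ω * GHf X Y w s ω ≤ 1 * 1 :=
        mul_le_mul (GHf_le_one t l ω) (GHf_le_one w s ω) (GHf_nonneg w s ω) zero_le_one
    _ = 1 := by norm_num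

lemma integral_GHf_mul_le_one (hXY : ∀ i, Measurable fun ω => (X i ω, Y i ω)) (t l w s : Fin n) :
    ∫ ω, GHf X Y t l ω * GHf X Y w s ω ∂ℙ ≤ 1 := by
  calc ∫ ω, GHf X Y t l ω * GHf X Y w s ω ∂ℙ ≤ ∫ _ω, (1:ℝ) ∂ℙ := by
        refine integral_mono (integrable_GHf_mul hXY t l w s) (integrable_const 1) fun ω => ?_
        calc GHf X Y t l ω * GHf X Y w s ω ≤ 1 * 1 :=
              mul_le_mul (GHf_le_one t l ω) (GHf_le_one w s ω) (GHf_nonneg w s ω) zero_le_one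
          _ = 1 := by norm_num
    _ = 1 := by simp

end SMBound

namespace SMBound

lemma sum4_mul {n : ℕ} (a : Fin n → Fin n → ℝ) :
    (∑ t : Fin n, ∑ l : Fin n, a t l) ^ 2
      = ∑ t : Fin n, ∑ l : Fin n, ∑ w : Fin n, ∑ s : Fin n, a t l * a w s := by
  rw [sq, Finset.sum_mul]
  refine Finset.sum_congr rfl fun t _ => ?_
  rw [Finset.sum_mul]
  refine Finset.sum_congr rfl fun l _ => ?_
  rw [Finset.mul_sum]
  refine Finset.sum_congr rfl fun w _ => ?_
  rw [Finset.mul_sum]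

lemma swap_sum {n : ℕ} (a : Fin n → Fin n → ℝ) :
    ∑ t : Fin n, ∑ l : Fin n, (if t < l then a l t else 0)
      = ∑ t : Fin n, ∑ l : Fin n, (if l < t then a t l else 0) :=
  Finset.sum_comm

lemma combine_ite {n : ℕ} (t l : Fin n) (a : Fin n → Fin n → ℝ) (hdiag : ∀ u, a u u = 0) :
    (if t < l then a t l else 0) + (if l < t then a t l else 0) = a t l := by
  rcases lt_trichotomy t l with h | h | h
  · simp [h, lt_asymm h]
  · subst h; simp [lt_irrefl, hdiag]
  · simp [h, lt_asymm h]

lemma split_sum {n : ℕ} (a : Fin n → Fin n → ℝ) (hdiag : ∀ u, a u u = 0) :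
    ∑ t : Fin n, ∑ l : Fin n, (if t < l then a t l + a l t else 0)
      = ∑ t : Fin n, ∑ l : Fin n, a t l := by
  calc ∑ t : Fin n, ∑ l : Fin n, (if t < l then a t l + a l t else 0)
      = ∑ t : Fin n, ∑ l : Fin n,
          ((if t < l then a t l else 0) + (if t < l then a l t else 0)) := by
        refine Finset.sum_congr rfl fun t _ => Finset.sum_congr rfl fun l _ => ?_
        split <;> simp
    _ = (∑ t : Fin n, ∑ l : Fin n, (if t < l then a t l else 0))
        + ∑ t : Fin n, ∑ l : Fin n, (if t < l then a l t else 0) := by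
        rw [← Finset.sum_add_distrib]
        exact Finset.sum_congr rfl fun t _ => Finset.sum_add_distrib
    _ = (∑ t : Fin n, ∑ l : Fin n, (if t < l then a t l else 0))
        + ∑ t : Fin n, ∑ l : Fin n, (if l < t then a t l else 0) := by
        have := swap_sum a; linarith
    _ = ∑ t : Fin n, ∑ l : Fin n,
          ((if t < l then a t l else 0) + (if l < t then a t l else 0)) := by
        rw [← Finset.sum_add_distrib]
        exact Finset.sum_congr rfl fun t _ => Finset.sum_add_distrib.symm
    _ = ∑ t : Fin n, ∑ l : Fin n, a t l :=
        Finset.sum_congr rfl fun t _ => Finset.sum_congr rfl fun l _ =>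
          combine_ite t l a hdiag

end SMBound


open SMBound


/-- For independent random vectors `(X_1,Y_1), …, (X_n,Y_n)` with absolutely
continuous bivariate distributions (given by densities `f i`), with `I_{ji} = I(Y_{j,n} ≤ Y_{i,n})`
the concomitant comparison indicators (encoded by an a.s. sorting permutation `σ ω` of the
`X`-sample) and `p_{mk} = P(X_k ≤ X_m, Y_k ≤ Y_m)`, one has
`E[(∑_{j<i} I_{ji})²] ≤ (∑_k ∑_{m≠k} p_{mk})² + n(n-1)/2 + n(n-1)(n-2)`. -/
theorem second_moment_concomitant_indicator_sum_bound
    {Ω : Type*} [MeasureSpace Ω] [IsProbabilityMeasure (ℙ : Measure Ω)]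
    (n : ℕ)
    (X Y : Fin n → Ω → ℝ)
    (hXY : ∀ i, Measurable fun ω => (X i ω, Y i ω))
    (hindep : iIndepFun (fun i ω => (X i ω, Y i ω)) ℙ)
    (f : Fin n → ℝ × ℝ → ℝ)
    (hf_meas : ∀ i, Measurable (f i))
    (hf_nonneg : ∀ i p, 0 ≤ f i p)
    (hlaw : ∀ i, Measure.map (fun ω => (X i ω, Y i ω)) ℙ
        = (volume : Measure (ℝ × ℝ)).withDensity fun p => ENNReal.ofReal (f i p))
    (σ : Ω → Equiv.Perm (Fin n))
    (hσ : ∀ᵐ ω ∂ℙ, StrictMono fun j : Fin n => X (σ ω j) ω) :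
    ∫ ω, (∑ i : Fin n, ∑ j : Fin n,
        if j < i ∧ Y (σ ω j) ω ≤ Y (σ ω i) ω then (1 : ℝ) else 0) ^ 2 ∂ℙ
      ≤ (∑ k : Fin n, ∑ m : Fin n,
          if m ≠ k then (ℙ {ω | X k ω ≤ X m ω ∧ Y k ω ≤ Y m ω}).toReal else 0) ^ 2
        + (n : ℝ) * ((n : ℝ) - 1) / 2 + (n : ℝ) * ((n : ℝ) - 1) * ((n : ℝ) - 2) := by
  classical
  -- the weak-comparison probabilities
  set ρ : Fin n → Fin n → ℝ := fun t l => (ℙ (evB X Y t l)).toReal with hρ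
  set cR : Fin n → Fin n → ℝ := fun t l => if t < l then ρ t l + ρ l t else 0 with hcR
  have cR_nonneg : ∀ t l, 0 ≤ cR t l := by
    intro t l
    rw [hcR]
    dsimp only
    split
    · exact add_nonneg ENNReal.toReal_nonneg ENNReal.toReal_nonneg
    · exact le_refl 0
  -- Step A : a.e. rewrite of the integrand
  have hae : ∀ᵐ ω ∂ℙ, (∑ i : Fin n, ∑ j : Fin n,
        if j < i ∧ Y (σ ω j) ω ≤ Y (σ ω i) ω then (1 : ℝ) else 0) ^ 2
      = (∑ t : Fin n, ∑ l : Fin n, GHf X Y t l ω) ^ 2 := by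
    filter_upwards [hσ] with ω hm
    congr 1
    calc ∑ i : Fin n, ∑ j : Fin n,
          (if j < i ∧ Y (σ ω j) ω ≤ Y (σ ω i) ω then (1 : ℝ) else 0)
        = ∑ i : Fin n, ∑ j : Fin n, Ff X Y (σ ω j) (σ ω i) ω := by
          refine Finset.sum_congr rfl fun i _ => Finset.sum_congr rfl fun j _ => ?_
          have hlt : (j < i) ↔ (X (σ ω j) ω < X (σ ω i) ω) := (hm.lt_iff_lt).symm
          unfold Ff
          exact if_congr (and_congr_left fun _ => hlt) rfl rfl
      _ = ∑ i : Fin n, ∑ j : Fin n, Ff X Y j (σ ω i) ω := by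
          refine Finset.sum_congr rfl fun i _ => ?_
          exact Equiv.sum_comp (σ ω) fun j => Ff X Y j (σ ω i) ω
      _ = ∑ j : Fin n, ∑ i : Fin n, Ff X Y j (σ ω i) ω := Finset.sum_comm
      _ = ∑ j : Fin n, ∑ i : Fin n, Ff X Y j i ω := by
          refine Finset.sum_congr rfl fun j _ => ?_
          exact Equiv.sum_comp (σ ω) fun i => Ff X Y j i ω
      _ = ∑ t : Fin n, ∑ l : Fin n, GHf X Y t l ω := by
          rw [← split_sum (fun t l => Ff X Y t l ω) (fun u => by simp [Ff, lt_irrefl])]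
          rfl
  rw [integral_congr_ae hae]
  -- integrability facts
  have hint : ∀ t l w s : Fin n, Integrable (fun ω => GHf X Y t l ω * GHf X Y w s ω) ℙ :=
    fun t l w s => integrable_GHf_mul hXY t l w s
  have hint3 : ∀ t l w : Fin n,
      Integrable (fun ω => ∑ s : Fin n, GHf X Y t l ω * GHf X Y w s ω) ℙ :=
    fun t l w => integrable_finset_sum _ fun s _ => hint t l w s
  have hint2 : ∀ t l : Fin n,
      Integrable (fun ω => ∑ w : Fin n, ∑ s : Fin n, GHf X Y t l ω * GHf X Y w s ω) ℙ :=
    fun t l => integrable_finset_sum _ fun w _ => hint3 t l w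
  have hint1 : ∀ t : Fin n,
      Integrable (fun ω => ∑ l : Fin n, ∑ w : Fin n, ∑ s : Fin n,
          GHf X Y t l ω * GHf X Y w s ω) ℙ :=
    fun t => integrable_finset_sum _ fun l _ => hint2 t l
  -- expand the square and exchange with the integral
  have hexp : ∫ ω, (∑ t : Fin n, ∑ l : Fin n, GHf X Y t l ω) ^ 2 ∂ℙ
      = ∑ t : Fin n, ∑ l : Fin n, ∑ w : Fin n, ∑ s : Fin n,
          ∫ ω, GHf X Y t l ω * GHf X Y w s ω ∂ℙ := by
    calc ∫ ω, (∑ t : Fin n, ∑ l : Fin n, GHf X Y t l ω) ^ 2 ∂ℙ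
        = ∫ ω, (∑ t : Fin n, ∑ l : Fin n, ∑ w : Fin n, ∑ s : Fin n,
            GHf X Y t l ω * GHf X Y w s ω) ∂ℙ := by
          refine integral_congr_ae (Filter.Eventually.of_forall fun ω => ?_)
          exact sum4_mul fun t l => GHf X Y t l ω
      _ = ∑ t : Fin n, ∑ l : Fin n, ∑ w : Fin n, ∑ s : Fin n,
            ∫ ω, GHf X Y t l ω * GHf X Y w s ω ∂ℙ := by
          rw [integral_finset_sum _ fun t _ => hint1 t]
          refine Finset.sum_congr rfl fun t _ => ?_
          rw [integral_finset_sum _ fun l _ => hint2 t l]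
          refine Finset.sum_congr rfl fun l _ => ?_
          rw [integral_finset_sum _ fun w _ => hint3 t l w]
          refine Finset.sum_congr rfl fun w _ => ?_
          rw [integral_finset_sum _ fun s _ => hint t l w s]
  rw [hexp]
  -- the per-term bound
  have key : ∀ t l w s : Fin n, ∫ ω, GHf X Y t l ω * GHf X Y w s ω ∂ℙ
      ≤ (if t < l ∧ w < s ∧ ¬(t ≠ w ∧ t ≠ s ∧ l ≠ w ∧ l ≠ s) then (1:ℝ) else 0)
        + cR t l * cR w s := by
    intro t l w s
    have hnn := mul_nonneg (cR_nonneg t l) (cR_nonneg w s)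
    by_cases ht : t < l
    · by_cases hw : w < s
      · by_cases hD : t ≠ w ∧ t ≠ s ∧ l ≠ w ∧ l ≠ s
        · have hov : ¬(t < l ∧ w < s ∧ ¬(t ≠ w ∧ t ≠ s ∧ l ≠ w ∧ l ≠ s)) := by tauto
          rw [if_neg hov, zero_add]
          obtain ⟨d1, d2, d3, d4⟩ := hD
          have hfun : (fun ω => GHf X Y t l ω * GHf X Y w s ω)
              = fun ω => Ff X Y t l ω * Ff X Y w s ω + Ff X Y t l ω * Ff X Y s w ω
                + Ff X Y l t ω * Ff X Y w s ω + Ff X Y l t ω * Ff X Y s w ω := by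
            funext ω
            simp only [GHf, if_pos ht, if_pos hw]
            ring
          rw [hfun]
          have i1 := integrable_Ff_mul hXY t l w s
          have i2 := integrable_Ff_mul hXY t l s w
          have i3 := integrable_Ff_mul hXY l t w s
          have i4 := integrable_Ff_mul hXY l t s w
          have i12 : Integrable (fun ω => Ff X Y t l ω * Ff X Y w s ω
              + Ff X Y t l ω * Ff X Y s w ω) ℙ := i1.add i2
          have i123 : Integrable (fun ω => Ff X Y t l ω * Ff X Y w s ω
              + Ff X Y t l ω * Ff X Y s w ω + Ff X Y l t ω * Ff X Y w s ω) ℙ := i12.add i3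
          rw [integral_add i123 i4, integral_add i12 i3, integral_add i1 i2]
          have b1 := int_Ff_mul_le (X := X) (Y := Y) hindep hXY d1 d2 d3 d4
          have b2 := int_Ff_mul_le (X := X) (Y := Y) hindep hXY d2 d1 d4 d3
          have b3 := int_Ff_mul_le (X := X) (Y := Y) hindep hXY d3 d4 d1 d2
          have b4 := int_Ff_mul_le (X := X) (Y := Y) hindep hXY d4 d3 d2 d1
          have hc : cR t l * cR w s = ρ t l * ρ w s + ρ t l * ρ s w
              + ρ l t * ρ w s + ρ l t * ρ s w := by
            rw [hcR]
            dsimp only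
            rw [if_pos ht, if_pos hw]
            ring
          rw [hc]
          rw [hρ] at *
          dsimp only at *
          linarith [b1, b2, b3, b4]
        · rw [if_pos ⟨ht, hw, hD⟩]
          have h1 := integral_GHf_mul_le_one hXY t l w s
          linarith
      · have hzero : (fun ω => GHf X Y t l ω * GHf X Y w s ω) = fun _ => (0:ℝ) := by
          funext ω
          simp [GHf, hw]
        rw [hzero, integral_zero]
        have := ite_nn (t < l ∧ w < s ∧ ¬(t ≠ w ∧ t ≠ s ∧ l ≠ w ∧ l ≠ s))
        linarith
    · have hzero : (fun ω => GHf X Y t l ω * GHf X Y w s ω) = fun _ => (0:ℝ) := by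
        funext ω
        simp [GHf, ht]
      rw [hzero, integral_zero]
      have := ite_nn (t < l ∧ w < s ∧ ¬(t ≠ w ∧ t ≠ s ∧ l ≠ w ∧ l ≠ s))
      linarith
  -- sum the per-term bounds
  have step2 : ∑ t : Fin n, ∑ l : Fin n, ∑ w : Fin n, ∑ s : Fin n,
        ∫ ω, GHf X Y t l ω * GHf X Y w s ω ∂ℙ
      ≤ (∑ t : Fin n, ∑ l : Fin n, ∑ w : Fin n, ∑ s : Fin n,
          (if t < l ∧ w < s ∧ ¬(t ≠ w ∧ t ≠ s ∧ l ≠ w ∧ l ≠ s) then (1:ℝ) else 0))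
        + ∑ t : Fin n, ∑ l : Fin n, ∑ w : Fin n, ∑ s : Fin n, cR t l * cR w s := by
    have : ∑ t : Fin n, ∑ l : Fin n, ∑ w : Fin n, ∑ s : Fin n,
          ∫ ω, GHf X Y t l ω * GHf X Y w s ω ∂ℙ
        ≤ ∑ t : Fin n, ∑ l : Fin n, ∑ w : Fin n, ∑ s : Fin n,
          ((if t < l ∧ w < s ∧ ¬(t ≠ w ∧ t ≠ s ∧ l ≠ w ∧ l ≠ s) then (1:ℝ) else 0)
            + cR t l * cR w s) :=
      Finset.sum_le_sum fun t _ => Finset.sum_le_sum fun l _ =>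
        Finset.sum_le_sum fun w _ => Finset.sum_le_sum fun s _ => key t l w s
    refine this.trans (le_of_eq ?_)
    simp only [Finset.sum_add_distrib]
  have hsq : ∑ t : Fin n, ∑ l : Fin n, ∑ w : Fin n, ∑ s : Fin n, cR t l * cR w s
      = (∑ t : Fin n, ∑ l : Fin n, cR t l) ^ 2 := (sum4_mul cR).symm
  -- identify the probability sum
  have hcsum : ∑ t : Fin n, ∑ l : Fin n, cR t l
      = ∑ k : Fin n, ∑ m : Fin n,
          if m ≠ k then (ℙ {ω | X k ω ≤ X m ω ∧ Y k ω ≤ Y m ω}).toReal else 0 := by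
    have h1 : ∀ t l : Fin n, cR t l
        = (if t < l then (if l ≠ t then ρ t l else 0) + (if t ≠ l then ρ l t else 0) else 0) := by
      intro t l
      rw [hcR]
      dsimp only
      by_cases h : t < l
      · rw [if_pos h, if_pos h, if_pos (ne_of_lt h).symm, if_pos (ne_of_lt h)]
      · rw [if_neg h, if_neg h]
    calc ∑ t : Fin n, ∑ l : Fin n, cR t l
        = ∑ t : Fin n, ∑ l : Fin n,
            (if t < l then (if l ≠ t then ρ t l else 0) + (if t ≠ l then ρ l t else 0)
              else 0) := by
          exact Finset.sum_congr rfl fun t _ => Finset.sum_congr rfl fun l _ => h1 t l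
      _ = ∑ t : Fin n, ∑ l : Fin n, (if l ≠ t then ρ t l else 0) := by
          refine split_sum (fun t l => if l ≠ t then ρ t l else 0) fun u => ?_
          simp
      _ = ∑ k : Fin n, ∑ m : Fin n,
            if m ≠ k then (ℙ {ω | X k ω ≤ X m ω ∧ Y k ω ≤ Y m ω}).toReal else 0 := by
          refine Finset.sum_congr rfl fun k _ => Finset.sum_congr rfl fun m _ => ?_
          rw [hρ]
          rfl
  have hcount := count_le n
  calc ∑ t : Fin n, ∑ l : Fin n, ∑ w : Fin n, ∑ s : Fin n,
        ∫ ω, GHf X Y t l ω * GHf X Y w s ω ∂ℙ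
      ≤ (∑ t : Fin n, ∑ l : Fin n, ∑ w : Fin n, ∑ s : Fin n,
          (if t < l ∧ w < s ∧ ¬(t ≠ w ∧ t ≠ s ∧ l ≠ w ∧ l ≠ s) then (1:ℝ) else 0))
        + ∑ t : Fin n, ∑ l : Fin n, ∑ w : Fin n, ∑ s : Fin n, cR t l * cR w s := step2
    _ ≤ ((n : ℝ) * ((n : ℝ) - 1) / 2 + (n : ℝ) * ((n : ℝ) - 1) * ((n : ℝ) - 2))
        + (∑ t : Fin n, ∑ l : Fin n, cR t l) ^ 2 := by
        rw [hsq]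
        exact add_le_add_left hcount _
    _ = (∑ k : Fin n, ∑ m : Fin n,
          if m ≠ k then (ℙ {ω | X k ω ≤ X m ω ∧ Y k ω ≤ Y m ω}).toReal else 0) ^ 2
        + (n : ℝ) * ((n : ℝ) - 1) / 2 + (n : ℝ) * ((n : ℝ) - 1) * ((n : ℝ) - 2) := by
        rw [hcsum]
        ring
end
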